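/- arXiv:2510.22377 — 4 statements merged into one kernel-verified Lean document; each statement's English description precedes it below -/
import Mathlib

section
/- Let k be a field and let w : ℕ → {a,b} be a right-infinite binary word. Let M(α₂w) be the representation obtained from the string module M(w) by enlarging V₁ with one additional basis vector y⋆ and setting α₁(y⋆) = 0 and α₂(y⋆) = x₀ (this is the string module of the string α₂w). Then M(α₂w) is a brick if and only if w(0) = b and there exists an irrational α ∈ (0,1) such that the shifted word n ↦ w(n+1) equals the characteristic word c_α of slope α; that is, if and only if w = b·w' for some characteristic word w'. -/
/-!
STATEMENT 2: Over the double-Kronecker gentle algebra, let `w : ℕ → Bool`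
(`a = false`, `b = true`) and let `M(α₂w)` be the string module of `w` with
`V₁` enlarged by one extra basis vector `y⋆` (indexed by `none`), where
`α₁(y⋆) = 0` and `α₂(y⋆) = x₀`. Then `M(α₂w)` is a brick iff `w(0) = b` and
the shift `n ↦ w(n+1)` is the characteristic word of some irrational slope
`α ∈ (0,1)`.
-/

namespace StringBricks

/-- A representation of the double-Kronecker gentle algebra. -/
structure DKRep (k : Type) [Field k] where
  V1 : Type
  V2 : Type
  V3 : Type
  [acg1 : AddCommGroup V1]
  [acg2 : AddCommGroup V2]
  [acg3 : AddCommGroup V3]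
  [mod1 : Module k V1]
  [mod2 : Module k V2]
  [mod3 : Module k V3]
  a1 : V1 →ₗ[k] V2
  a2 : V1 →ₗ[k] V2
  b1 : V2 →ₗ[k] V3
  b2 : V2 →ₗ[k] V3
  rel1 : b1.comp a1 = 0
  rel2 : b2.comp a2 = 0

attribute [instance] DKRep.acg1 DKRep.acg2 DKRep.acg3 DKRep.mod1 DKRep.mod2 DKRep.mod3

/-- A morphism of representations of the double-Kronecker gentle algebra. -/
structure DKHom {k : Type} [Field k] (M N : DKRep k) where
  f1 : M.V1 →ₗ[k] N.V1
  f2 : M.V2 →ₗ[k] N.V2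
  f3 : M.V3 →ₗ[k] N.V3
  comm_a1 : f2.comp M.a1 = N.a1.comp f1
  comm_a2 : f2.comp M.a2 = N.a2.comp f1
  comm_b1 : f3.comp M.b1 = N.b1.comp f2
  comm_b2 : f3.comp M.b2 = N.b2.comp f2

/-- A representation is a brick if every nonzero endomorphism is an isomorphism. -/
def IsBrick {k : Type} [Field k] (M : DKRep k) : Prop :=
  ∀ f : DKHom M M, (f.f1 ≠ 0 ∨ f.f2 ≠ 0 ∨ f.f3 ≠ 0) →
    Function.Bijective f.f1 ∧ Function.Bijective f.f2 ∧ Function.Bijective f.f3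

/-- The string module `M(α₂w)` of the string `α₂w`: the string module of `w`
with one extra basis vector `y⋆` (indexed by `none`) in `V₁`, where
`α₁ y⋆ = 0` and `α₂ y⋆ = x₀`. -/
noncomputable def stringModuleAlpha2 (k : Type) [Field k] (w : ℕ → Bool) : DKRep k where
  V1 := Option {i : ℕ // w i = false} →₀ k
  V2 := ℕ →₀ k
  V3 := {i : ℕ // w i = true} →₀ k
  a1 := Finsupp.lsum k fun o : Option {i : ℕ // w i = false} =>
          match o with
          | none => 0
          | some i => Finsupp.lsingle (i : ℕ)
  a2 := Finsupp.lsum k fun o : Option {i : ℕ // w i = false} =>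
          match o with
          | none => Finsupp.lsingle 0
          | some i => Finsupp.lsingle ((i : ℕ) + 1)
  b1 := Finsupp.lsum k fun i : ℕ =>
          if h : w i = true then Finsupp.lsingle (⟨i, h⟩ : {j : ℕ // w j = true}) else 0
  b2 := Finsupp.lsum k fun j : ℕ =>
          if h : 0 < j ∧ w (j - 1) = true
          then Finsupp.lsingle (⟨j - 1, h.2⟩ : {i : ℕ // w i = true}) else 0
  rel1 := by
    apply Finsupp.lhom_ext
    intro o x
    match o with
    | none => simp
    | some i => simp [i.2]
  rel2 := by
    apply Finsupp.lhom_ext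
    intro o x
    match o with
    | none => simp
    | some i => simp [i.2]

/-- The characteristic word of slope `α`. -/
noncomputable def charWord (α : ℝ) : ℕ → Bool :=
  fun n => decide (⌊((n : ℝ) + 2) * α⌋ - ⌊((n : ℝ) + 1) * α⌋ = 1)


/-- strict lexicographic: first difference has `s` false, `t` true -/
def wlt (s t : ℕ → Bool) : Prop := ∃ j, s j = false ∧ t j = true ∧ ∀ i < j, s i = t i

def Seed (w : ℕ → Bool) (p q : ℕ) : Prop :=
  (q = 0 ∧ p ≠ 0) ∨ (p ≠ 0 ∧ q ≠ 0 ∧ w (p-1) = true ∧ w (q-1) = false)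

def Overlap (w : ℕ → Bool) : Prop :=
  ∃ p q, Seed w p q ∧ ¬ wlt (fun j => w (p+j)) (fun j => w (q+j))

def wInt (w : ℕ → Bool) (n : ℕ) : ℤ := if w n then 1 else 0

def cnt (w : ℕ → Bool) (i L : ℕ) : ℤ := ∑ j ∈ Finset.range L, wInt w (i+j)

lemma wInt_nonneg (w : ℕ → Bool) (n : ℕ) : 0 ≤ wInt w n := by
  unfold wInt; split <;> norm_num

lemma wInt_le_one (w : ℕ → Bool) (n : ℕ) : wInt w n ≤ 1 := by
  unfold wInt; split <;> norm_num

lemma wInt_eq (w : ℕ → Bool) {a b : ℕ} (h : w a = w b) : wInt w a = wInt w b := by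
  unfold wInt; rw [h]

lemma w_eq_of_wInt {w : ℕ → Bool} {a b : ℕ} (h : wInt w a = wInt w b) : w a = w b := by
  unfold wInt at h
  cases ha : w a <;> cases hb : w b <;> simp [ha, hb] at h ⊢

lemma wInt_true {w : ℕ → Bool} {n : ℕ} (h : w n = true) : wInt w n = 1 := by simp [wInt, h]
lemma wInt_false {w : ℕ → Bool} {n : ℕ} (h : w n = false) : wInt w n = 0 := by simp [wInt, h]

lemma cnt_zero (w : ℕ → Bool) (i : ℕ) : cnt w i 0 = 0 := by simp [cnt]

lemma cnt_succ (w : ℕ → Bool) (i L : ℕ) : cnt w i (L+1) = cnt w i L + wInt w (i+L) := by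
  simp [cnt, Finset.sum_range_succ]

lemma cnt_succ' (w : ℕ → Bool) (i L : ℕ) : cnt w i (L+1) = wInt w i + cnt w (i+1) L := by
  unfold cnt
  rw [Finset.sum_range_succ']
  have h1 : ∀ j, i + (j+1) = (i+1) + j := by omega
  simp only [Nat.add_zero]
  rw [add_comm]
  congr 1
  apply Finset.sum_congr rfl; intro j _; rw [h1 j]

lemma cnt_add (w : ℕ → Bool) (i a b : ℕ) : cnt w i (a+b) = cnt w i a + cnt w (i+a) b := by
  induction b with
  | zero => simp [cnt_zero]
  | succ b ih =>
      rw [show a + (b+1) = (a+b)+1 by ring, cnt_succ, ih, cnt_succ,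
        show i + (a+b) = i + a + b by ring, add_assoc]

lemma cnt_nonneg (w : ℕ → Bool) (i L : ℕ) : 0 ≤ cnt w i L := by
  apply Finset.sum_nonneg; intro j _; exact wInt_nonneg w _

lemma cnt_le (w : ℕ → Bool) (i L : ℕ) : cnt w i L ≤ L := by
  calc cnt w i L ≤ ∑ j ∈ Finset.range L, 1 := Finset.sum_le_sum (fun j _ => wInt_le_one w _)
  _ = L := by simp

lemma cnt_congr (w : ℕ → Bool) {i j L : ℕ} (h : ∀ t < L, w (i+t) = w (j+t)) :
    cnt w i L = cnt w j L := by
  apply Finset.sum_congr rfl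
  intro t ht
  exact wInt_eq w (h t (Finset.mem_range.mp ht))


lemma true_of_wInt {w : ℕ → Bool} {n : ℕ} (h : wInt w n = 1) : w n = true := by
  by_contra hc
  rw [wInt_false (by simpa using hc)] at h; norm_num at h

lemma false_of_wInt {w : ℕ → Bool} {n : ℕ} (h : wInt w n = 0) : w n = false := by
  by_contra hc
  rw [wInt_true (by simpa using hc)] at h; norm_num at h

set_option maxHeartbeats 1000000 in
theorem balanced (w : ℕ → Bool) (H : ¬ Overlap w) : ∀ L i j, cnt w i L ≤ cnt w j L + 1 := by
  classical
  by_contra hcon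
  push_neg at hcon
  have hex : ∃ L, ∃ i j, cnt w j L + 2 ≤ cnt w i L := by
    obtain ⟨L, i, j, h⟩ := hcon; exact ⟨L, i, j, by omega⟩
  obtain ⟨i, j, hij⟩ := Nat.find_spec hex
  have hmin : ∀ L < Nat.find hex, ∀ a b, cnt w a L ≤ cnt w b L + 1 := by
    intro L hL a b
    by_contra hc
    exact Nat.find_min hex hL ⟨a, b, by omega⟩
  generalize hL0 : Nat.find hex = L0 at hij hmin
  -- L0 ≥ 2
  have hL2 : 2 ≤ L0 := by
    by_contra hc
    interval_cases L0
    · rw [cnt_zero, cnt_zero] at hij; omega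
    · have h1 := cnt_nonneg w j 1
      have h2 := cnt_le w i 1
      omega
  obtain ⟨L1, rfl⟩ : ∃ L1, L0 = L1 + 2 := ⟨L0 - 2, by omega⟩
  -- decompositions
  have deci : cnt w i (L1+2) = wInt w i + cnt w (i+1) L1 + wInt w (i+1+L1) := by
    rw [show L1 + 2 = (L1+1)+1 by ring, cnt_succ', cnt_succ]; ring
  have decj : cnt w j (L1+2) = wInt w j + cnt w (j+1) L1 + wInt w (j+1+L1) := by
    rw [show L1 + 2 = (L1+1)+1 by ring, cnt_succ', cnt_succ]; ring
  have hA : cnt w (i+1) (L1+1) ≤ cnt w (j+1) (L1+1) + 1 := hmin (L1+1) (by omega) _ _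
  have hB : cnt w i (L1+1) ≤ cnt w j (L1+1) + 1 := hmin (L1+1) (by omega) _ _
  have e1 : cnt w (i+1) (L1+1) = cnt w (i+1) L1 + wInt w (i+1+L1) := cnt_succ w (i+1) L1
  have e2 : cnt w (j+1) (L1+1) = cnt w (j+1) L1 + wInt w (j+1+L1) := cnt_succ w (j+1) L1
  have e3 : cnt w i (L1+1) = wInt w i + cnt w (i+1) L1 := cnt_succ' w i L1
  have e4 : cnt w j (L1+1) = wInt w j + cnt w (j+1) L1 := cnt_succ' w j L1
  have b1 := wInt_nonneg w i; have b2 := wInt_le_one w i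
  have b3 := wInt_nonneg w j; have b4 := wInt_le_one w j
  have b5 := wInt_nonneg w (i+1+L1); have b6 := wInt_le_one w (i+1+L1)
  have b7 := wInt_nonneg w (j+1+L1); have b8 := wInt_le_one w (j+1+L1)
  have hdi : wInt w i = 1 := by omega
  have hdj : wInt w j = 0 := by omega
  have hei : wInt w (i+1+L1) = 1 := by omega
  have hej : wInt w (j+1+L1) = 0 := by omega
  have hmid : cnt w (i+1) L1 = cnt w (j+1) L1 := by omega
  have hfi : w i = true := true_of_wInt hdi
  have hfj : w j = false := false_of_wInt hdj
  have hli : w (i+1+L1) = true := true_of_wInt hei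
  have hlj : w (j+1+L1) = false := false_of_wInt hej
  by_cases hmw : ∀ t < L1, w (i+1+t) = w (j+1+t)
  · -- build Overlap
    apply H
    refine ⟨i+1, j+1, Or.inr ⟨by omega, by omega, by simpa using hfi, by simpa using hfj⟩, ?_⟩
    rintro ⟨jj, hs, ht, hb⟩
    simp only at hs ht hb
    rcases lt_trichotomy jj L1 with h | h | h
    · rw [hmw jj h] at hs; rw [hs] at ht; exact absurd ht (by simp)
    · subst h; rw [hs] at hli; exact absurd hli (by simp)
    · have := hb L1 h
      rw [hli, hlj] at this; exact absurd this (by simp)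
  · push_neg at hmw
    have hex2 : ∃ t, t < L1 ∧ w (i+1+t) ≠ w (j+1+t) := hmw
    obtain ⟨ht0lt, ht0ne⟩ := Nat.find_spec hex2
    set t0 := Nat.find hex2 with ht0def
    have hbef : ∀ t < t0, w (i+1+t) = w (j+1+t) := by
      intro t ht
      by_contra hc
      exact Nat.find_min hex2 ht ⟨ht.trans ht0lt, hc⟩
    have hm : cnt w (i+1) t0 = cnt w (j+1) t0 := cnt_congr w hbef
    cases hAc : w (i+1+t0) <;> cases hBc : w (j+1+t0)
    · exact ht0ne (by rw [hAc, hBc])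
    · -- i-side false, j-side true: tail windows
      -- mi = cnt(i+1) (t0+1) + tail_s, with cnt(i+1)(t0+1) = m + 0
      have hsplit_i : cnt w (i+1) L1 = cnt w (i+1) (t0+1) + cnt w (i+1+(t0+1)) (L1-t0-1) := by
        rw [← cnt_add w (i+1) (t0+1) (L1-t0-1), show t0+1+(L1-t0-1) = L1 by omega]
      have hsplit_j : cnt w (j+1) L1 = cnt w (j+1) (t0+1) + cnt w (j+1+(t0+1)) (L1-t0-1) := by
        rw [← cnt_add w (j+1) (t0+1) (L1-t0-1), show t0+1+(L1-t0-1) = L1 by omega]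
      rw [cnt_succ] at hsplit_i hsplit_j
      rw [wInt_false hAc] at hsplit_i
      rw [wInt_true hBc] at hsplit_j
      set ts := cnt w (i+1+(t0+1)) (L1-t0-1) with hts
      set tt := cnt w (j+1+(t0+1)) (L1-t0-1) with htt
      have htail : ts = tt + 1 := by omega
      -- new windows of length L1 - t0
      have hwin_i : cnt w (i+1+(t0+1)) (L1-t0) = ts + 1 := by
        rw [show L1 - t0 = (L1-t0-1)+1 by omega, cnt_succ,
          show i+1+(t0+1)+(L1-t0-1) = i+1+L1 by omega, hei, hts]
      have hwin_j : cnt w (j+1+(t0+1)) (L1-t0) = tt := by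
        rw [show L1 - t0 = (L1-t0-1)+1 by omega, cnt_succ,
          show j+1+(t0+1)+(L1-t0-1) = j+1+L1 by omega, hej]
        omega
      have := hmin (L1-t0) (by omega) (i+1+(t0+1)) (j+1+(t0+1))
      omega
    · -- i-side true, j-side false: prefix windows of length t0+2
      have hpre_i : cnt w i (t0+2) = wInt w i + cnt w (i+1) t0 + wInt w (i+1+t0) := by
        rw [show t0+2 = (t0+1)+1 by ring, cnt_succ, cnt_succ',
          show i + (t0+1) = i+1+t0 by omega]
      have hpre_j : cnt w j (t0+2) = wInt w j + cnt w (j+1) t0 + wInt w (j+1+t0) := by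
        rw [show t0+2 = (t0+1)+1 by ring, cnt_succ, cnt_succ',
          show j + (t0+1) = j+1+t0 by omega]
      have v1 : wInt w (i+1+t0) = 1 := wInt_true hAc
      have v2 : wInt w (j+1+t0) = 0 := wInt_false hBc
      have := hmin (t0+2) (by omega) i j
      omega
    · exact ht0ne (by rw [hAc, hBc])


/-- generic lexicographic helpers -/
lemma wlt_step {s t : ℕ → Bool} (h0 : s 0 = t 0)
    (h : wlt (fun j => s (j+1)) (fun j => t (j+1))) : wlt s t := by
  obtain ⟨j, a, b, c⟩ := h
  exact ⟨j+1, a, b, fun i hi => by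
    cases i with
    | zero => exact h0
    | succ i => exact c i (by omega)⟩

lemma wlt_ext {s t s' t' : ℕ → Bool} (hs : ∀ j, s j = s' j) (ht : ∀ j, t j = t' j)
    (h : wlt s t) : wlt s' t' := by
  obtain ⟨j, a, b, c⟩ := h
  exact ⟨j, (hs j) ▸ a, (ht j) ▸ b, fun i hi => (hs i) ▸ (ht i) ▸ c i hi⟩

/-- floor addition formula -/
lemma floor_add' (x y : ℝ) :
    ⌊x + y⌋ = ⌊x⌋ + ⌊y⌋ + (if 1 ≤ Int.fract x + Int.fract y then 1 else 0) := by
  have hx : (⌊x⌋ : ℝ) + Int.fract x = x := Int.floor_add_fract x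
  have hy : (⌊y⌋ : ℝ) + Int.fract y = y := Int.floor_add_fract y
  have h1 : x + y = (Int.fract x + Int.fract y) + ((⌊x⌋ + ⌊y⌋ : ℤ) : ℝ) := by
    push_cast; linarith
  rw [h1, Int.floor_add_intCast]
  have h2 : (0:ℝ) ≤ Int.fract x + Int.fract y := by
    have := Int.fract_nonneg x; have := Int.fract_nonneg y; linarith
  have h3 : Int.fract x + Int.fract y < 2 := by
    have := Int.fract_lt_one x; have := Int.fract_lt_one y; linarith
  by_cases hc : 1 ≤ Int.fract x + Int.fract y
  · rw [if_pos hc]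
    have : ⌊Int.fract x + Int.fract y⌋ = 1 := by
      apply Int.floor_eq_iff.mpr
      refine ⟨by exact_mod_cast hc, by push_cast; linarith⟩
    omega
  · rw [if_neg hc]
    have : ⌊Int.fract x + Int.fract y⌋ = 0 := by
      apply Int.floor_eq_iff.mpr
      refine ⟨by exact_mod_cast h2, by push_cast; linarith⟩
    omega

section CharSide
variable {w : ℕ → Bool} {α : ℝ}

/-- step hypothesis: for n ≥ 1, wInt w n is the floor difference -/
def HStep (w : ℕ → Bool) (α : ℝ) : Prop :=
  ∀ p : ℕ, p ≠ 0 → wInt w p = ⌊((p:ℝ)+1)*α⌋ - ⌊(p:ℝ)*α⌋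

lemma hstep_of_char (h0 : 0 < α) (h1 : α < 1) (hc : ∀ n, w (n+1) = charWord α n) :
    HStep w α := by
  intro p hp
  obtain ⟨m, rfl⟩ : ∃ m, p = m + 1 := ⟨p - 1, by omega⟩
  have hcast : ((m+1 : ℕ) : ℝ) = (m:ℝ) + 1 := by push_cast; ring
  rw [hcast]
  have hdiff : ⌊((m:ℝ)+1+1)*α⌋ - ⌊((m:ℝ)+1)*α⌋ = 0 ∨ ⌊((m:ℝ)+1+1)*α⌋ - ⌊((m:ℝ)+1)*α⌋ = 1 := by
    have e : ((m:ℝ)+1+1)*α = ((m:ℝ)+1)*α + α := by ring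
    rw [e]
    have hle : ⌊((m:ℝ)+1)*α⌋ ≤ ⌊((m:ℝ)+1)*α + α⌋ := Int.floor_le_floor (by linarith)
    have hge : ⌊((m:ℝ)+1)*α + α⌋ ≤ ⌊((m:ℝ)+1)*α + 1⌋ := Int.floor_le_floor (by linarith)
    rw [Int.floor_add_one] at hge
    omega
  have hw := hc m
  unfold charWord at hw
  by_cases hP : ⌊((m:ℝ) + 2) * α⌋ - ⌊((m:ℝ) + 1) * α⌋ = 1
  · rw [wInt_true (by rw [hw]; simp [hP])]
    rw [show (m:ℝ)+1+1 = (m:ℝ)+2 by ring]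
    omega
  · rw [wInt_false (by rw [hw]; simp [hP])]
    rw [show (m:ℝ)+1+1 = (m:ℝ)+2 by ring] at hdiff ⊢
    omega

lemma hsum (hs : HStep w α) : ∀ (a : ℕ), a ≠ 0 → ∀ L : ℕ,
    cnt w a L = ⌊((a:ℝ)+L)*α⌋ - ⌊(a:ℝ)*α⌋ := by
  intro a ha L
  induction L with
  | zero => simp [cnt_zero]
  | succ L ih =>
      rw [cnt_succ, ih, hs (a+L) (by omega)]
      push_cast
      rw [show (a:ℝ)+(L+1) = (a:ℝ)+L+1 by ring]
      ring

lemma theta_nonzero (hirr : Irrational α) {p : ℕ} (hp : p ≠ 0) :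
    Int.fract ((p:ℝ)*α) ≠ 0 := by
  intro h
  have hz : (p:ℝ)*α = (⌊(p:ℝ)*α⌋ : ℝ) := by
    have := Int.floor_add_fract ((p:ℝ)*α); rw [h] at this; linarith
  have : α = ((⌊(p:ℝ)*α⌋ : ℝ)) / (p:ℝ) := by
    field_simp at hz ⊢
    · linarith [hz]
  rw [this] at hirr
  have : ((((⌊(p:ℝ)*α⌋ : ℚ)) / (p:ℚ) : ℚ) : ℝ) = ((⌊(p:ℝ)*α⌋ : ℝ)) / (p:ℝ) := by push_cast; ring
  rw [← this] at hirr
  exact Rat.not_irrational _ hirr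

lemma theta_true (hs : HStep w α) {p : ℕ} (hp : p ≠ 0) (h : w p = true) :
    Int.fract (((p:ℝ)+1)*α) = Int.fract ((p:ℝ)*α) + α - 1 := by
  have h1 := hs p hp
  rw [wInt_true h] at h1
  have e1 := Int.floor_add_fract (((p:ℝ)+1)*α)
  have e2 := Int.floor_add_fract ((p:ℝ)*α)
  have : (⌊((p:ℝ)+1)*α⌋ : ℝ) = (⌊(p:ℝ)*α⌋ : ℝ) + 1 := by
    have : ⌊((p:ℝ)+1)*α⌋ = ⌊(p:ℝ)*α⌋ + 1 := by omega
    exact_mod_cast this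
  nlinarith [this]

lemma theta_false (hs : HStep w α) {p : ℕ} (hp : p ≠ 0) (h : w p = false) :
    Int.fract (((p:ℝ)+1)*α) = Int.fract ((p:ℝ)*α) + α := by
  have h1 := hs p hp
  rw [wInt_false h] at h1
  have e1 := Int.floor_add_fract (((p:ℝ)+1)*α)
  have e2 := Int.floor_add_fract ((p:ℝ)*α)
  have : (⌊((p:ℝ)+1)*α⌋ : ℝ) = (⌊(p:ℝ)*α⌋ : ℝ) := by
    have : ⌊((p:ℝ)+1)*α⌋ = ⌊(p:ℝ)*α⌋ := by omega
    exact_mod_cast this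
  nlinarith [this]

/-- eventual periodicity contradicts irrationality -/
lemma periodic_rational (hs : HStep w α) (hirr : Irrational α)
    {a T : ℕ} (ha : a ≠ 0) (hT : T ≠ 0) (hper : ∀ j, w (a+j) = w (a+T+j)) : False := by
  have hblock : ∀ k t, w (a + k*T + t) = w (a + t) := by
    intro k
    induction k with
    | zero => intro t; norm_num
    | succ k ih =>
        intro t
        have h1 : a + (k+1)*T + t = a + T + (k*T + t) := by ring
        rw [h1, ← hper (k*T + t), show a + (k*T+t) = a + k*T + t by ring, ih]
  have hcnt : ∀ k : ℕ, cnt w a (k*T) = k * cnt w a T := by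
    intro k
    induction k with
    | zero => simp [cnt_zero]
    | succ k ih =>
        rw [show (k+1)*T = k*T + T by ring, cnt_add, ih]
        have : cnt w (a + k*T) T = cnt w a T :=
          cnt_congr w (fun t _ => hblock k t)
        rw [this]; push_cast; ring
  set r := cnt w a T with hr
  have key : ∀ k : ℕ, ⌊((a:ℝ) + k*T)*α⌋ = ⌊(a:ℝ)*α⌋ + k * r := by
    intro k
    have := hsum hs a ha (k*T)
    rw [hcnt k] at this
    push_cast at this ⊢
    omega
  -- bound : |k*(Tα - r)| < 2 for all k
  have hbound : ∀ k : ℕ, |(k:ℝ) * ((T:ℝ)*α - r)| < 2 := by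
    intro k
    have h1 := key k
    have f1 : ((a:ℝ) + k*T)*α - 1 < ((⌊(a:ℝ)*α⌋ : ℝ) + k*r) := by
      have := Int.sub_one_lt_floor (((a:ℝ) + k*T)*α)
      have e : ((⌊((a:ℝ)+k*T)*α⌋ : ℝ)) = (⌊(a:ℝ)*α⌋ : ℝ) + k*r := by exact_mod_cast congrArg (Int.cast : ℤ → ℝ) h1
      linarith
    have f2 : ((⌊(a:ℝ)*α⌋ : ℝ) + k*r) ≤ ((a:ℝ) + k*T)*α := by
      have := Int.floor_le (((a:ℝ) + k*T)*α)
      have e : ((⌊((a:ℝ)+k*T)*α⌋ : ℝ)) = (⌊(a:ℝ)*α⌋ : ℝ) + k*r := by exact_mod_cast congrArg (Int.cast : ℤ → ℝ) h1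
      linarith
    have f3 : (a:ℝ)*α - 1 < (⌊(a:ℝ)*α⌋ : ℝ) := Int.sub_one_lt_floor _
    have f4 : ((⌊(a:ℝ)*α⌋ : ℝ)) ≤ (a:ℝ)*α := Int.floor_le _
    rw [abs_lt]
    constructor <;> nlinarith
  have hTr : (T:ℝ)*α = r := by
    by_contra hne
    have hpos : 0 < |(T:ℝ)*α - r| := abs_pos.mpr (sub_ne_zero.mpr hne)
    obtain ⟨k, hk⟩ := exists_nat_gt (2 / |(T:ℝ)*α - r|)
    have := hbound k
    rw [abs_mul, abs_of_nonneg (by positivity : (0:ℝ) ≤ (k:ℝ))] at this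
    have h2 : 2 / |(T:ℝ)*α - (r:ℝ)| * |(T:ℝ)*α - (r:ℝ)| < (k:ℝ) * |(T:ℝ)*α - (r:ℝ)| := by
      exact mul_lt_mul_of_pos_right hk hpos
    rw [div_mul_cancel₀] at h2
    · linarith
    · exact ne_of_gt hpos
  have : α = (r:ℝ) / (T:ℝ) := by
    have hT' : (T:ℝ) ≠ 0 := by positivity
    field_simp
    linarith [hTr]
  rw [this] at hirr
  have : ((((r:ℚ)) / (T:ℚ) : ℚ) : ℝ) = ((r:ℝ)) / (T:ℝ) := by push_cast; ring
  rw [← this] at hirr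
  exact Rat.not_irrational _ hirr

/-- master comparison lemma -/
lemma master (hs : HStep w α) (hirr : Irrational α)
    {p q : ℕ} (hp : p ≠ 0) (hq : q ≠ 0)
    (hf : Int.fract ((p:ℝ)*α) < Int.fract ((q:ℝ)*α)) :
    wlt (fun j => w (p+j)) (fun j => w (q+j)) := by
  classical
  have hpq : p ≠ q := by
    intro h; rw [h] at hf; exact lt_irrefl _ hf
  by_cases hall : ∀ j, w (p+j) = w (q+j)
  · -- periodic, contradiction
    exfalso
    rcases Nat.lt_or_ge p q with h | h
    · exact periodic_rational hs hirr hp (show q - p ≠ 0 by omega)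
        (fun j => by rw [show p + (q-p) + j = q + j by omega]; exact hall j)
    · have h' : p > q ∨ p = q := by omega
      rcases h' with h' | h'
      · exact periodic_rational hs hirr hq (show p - q ≠ 0 by omega)
          (fun j => by rw [show q + (p-q) + j = p + j by omega]; exact (hall j).symm)
      · exact hpq h'
  · push_neg at hall
    have hex : ∃ j, w (p+j) ≠ w (q+j) := hall
    have hj0 : w (p + Nat.find hex) ≠ w (q + Nat.find hex) := Nat.find_spec hex
    have heq : ∀ i < Nat.find hex, w (p+i) = w (q+i) := by
      intro i hi
      by_contra hc
      exact Nat.find_min hex hi hc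
    set j0 := Nat.find hex with hj0def
    -- window sums
    have hsump : cnt w p (j0+1) = ⌊((p:ℝ)+(j0+1))*α⌋ - ⌊(p:ℝ)*α⌋ := by
      have := hsum hs p hp (j0+1); push_cast at this ⊢; exact this
    have hsumq : cnt w q (j0+1) = ⌊((q:ℝ)+(j0+1))*α⌋ - ⌊(q:ℝ)*α⌋ := by
      have := hsum hs q hq (j0+1); push_cast at this ⊢; exact this
    have hcp : cnt w p (j0+1) = cnt w p j0 + wInt w (p+j0) := cnt_succ w p j0
    have hcq : cnt w q (j0+1) = cnt w q j0 + wInt w (q+j0) := cnt_succ w q j0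
    have hcnteq : cnt w p j0 = cnt w q j0 := cnt_congr w heq
    -- floor decomposition of windows
    have hwp : ⌊((p:ℝ)+(j0+1))*α⌋ = ⌊(p:ℝ)*α⌋ + ⌊((j0:ℝ)+1)*α⌋ +
        (if 1 ≤ Int.fract ((p:ℝ)*α) + Int.fract (((j0:ℝ)+1)*α) then 1 else 0) := by
      rw [show ((p:ℝ)+(j0+1))*α = (p:ℝ)*α + ((j0:ℝ)+1)*α by push_cast; ring]
      exact floor_add' _ _
    have hwq : ⌊((q:ℝ)+(j0+1))*α⌋ = ⌊(q:ℝ)*α⌋ + ⌊((j0:ℝ)+1)*α⌋ +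
        (if 1 ≤ Int.fract ((q:ℝ)*α) + Int.fract (((j0:ℝ)+1)*α) then 1 else 0) := by
      rw [show ((q:ℝ)+(j0+1))*α = (q:ℝ)*α + ((j0:ℝ)+1)*α by push_cast; ring]
      exact floor_add' _ _
    -- monotonicity of the indicator
    have hind : (if 1 ≤ Int.fract ((p:ℝ)*α) + Int.fract (((j0:ℝ)+1)*α) then (1:ℤ) else 0) ≤
        (if 1 ≤ Int.fract ((q:ℝ)*α) + Int.fract (((j0:ℝ)+1)*α) then 1 else 0) := by
      by_cases hcp' : 1 ≤ Int.fract ((p:ℝ)*α) + Int.fract (((j0:ℝ)+1)*α)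
      · rw [if_pos hcp', if_pos (by linarith)]
      · rw [if_neg hcp']
        split <;> norm_num
    -- combine
    have hdiffint : wInt w (p+j0) ≤ wInt w (q+j0) := by omega
    have hne' : wInt w (p+j0) ≠ wInt w (q+j0) := fun hc => hj0 (w_eq_of_wInt hc)
    have b1 := wInt_nonneg w (p+j0); have b2 := wInt_le_one w (p+j0)
    have b3 := wInt_nonneg w (q+j0); have b4 := wInt_le_one w (q+j0)
    refine ⟨j0, false_of_wInt (by omega), true_of_wInt (by omega), heq⟩

lemma fract_one (h0 : 0 < α) (h1 : α < 1) : Int.fract ((1:ℕ)*α : ℝ) = α := by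
  push_cast
  rw [one_mul]
  exact Int.fract_eq_self.mpr ⟨le_of_lt h0, h1⟩

/-- after-b points: θ p ≤ α -/
lemma theta_after_b (hs : HStep w α) (hirr : Irrational α) (h0 : 0 < α) (h1 : α < 1)
    {p : ℕ} (hp : p ≠ 0) (hb : w (p-1) = true) (hp1 : p - 1 ≠ 0 ∨ p = 1) :
    Int.fract ((p:ℝ)*α) ≤ α := by
  rcases eq_or_lt_of_le (Nat.one_le_iff_ne_zero.mpr hp) with h | h
  · rw [← h]; rw [fract_one h0 h1]
  · obtain ⟨p', rfl⟩ : ∃ p', p = p' + 1 := ⟨p - 1, by omega⟩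
    have hp' : p' ≠ 0 := by omega
    have hb' : w p' = true := by simpa using hb
    have := theta_true hs hp' hb'
    push_cast at this ⊢
    rw [this]
    have := Int.fract_lt_one ((p':ℝ)*α)
    linarith

/-- after-a points (q-1 ≠ 0): θ q > α -/
lemma theta_after_a (hs : HStep w α) (hirr : Irrational α) (h0 : 0 < α) (h1 : α < 1)
    {q : ℕ} (hq : q ≠ 0) (hq1 : q - 1 ≠ 0) (ha : w (q-1) = false) :
    α < Int.fract ((q:ℝ)*α) := by
  obtain ⟨q', rfl⟩ : ∃ q', q = q' + 1 := ⟨q - 1, by omega⟩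
  have hq' : q' ≠ 0 := by simpa using hq1
  have ha' : w q' = false := by simpa using ha
  have := theta_false hs hq' ha'
  push_cast at this ⊢
  rw [this]
  have h2 : Int.fract ((q':ℝ)*α) ≠ 0 := theta_nonzero hirr hq'
  have h3 : 0 ≤ Int.fract ((q':ℝ)*α) := Int.fract_nonneg _
  have : 0 < Int.fract ((q':ℝ)*α) := lt_of_le_of_ne h3 (Ne.symm h2)
  linarith

/-- type 1: every proper suffix is smaller than w itself -/
lemma typeone (hs : HStep w α) (hirr : Irrational α) (h0 : 0 < α) (h1 : α < 1)
    (hw0 : w 0 = true) {p : ℕ} (hp : p ≠ 0) :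
    wlt (fun j => w (p+j)) (fun j => w (0+j)) := by
  cases hwp : w p with
  | false =>
      exact ⟨0, by simpa using hwp, by simpa using hw0, by omega⟩
  | true =>
      -- compare tails at (p+1, 1)
      have hfp : Int.fract (((p:ℝ)+1)*α) = Int.fract ((p:ℝ)*α) + α - 1 := theta_true hs hp hwp
      have hlt : Int.fract (((p+1 : ℕ):ℝ)*α) < Int.fract (((1:ℕ):ℝ)*α) := by
        push_cast
        rw [show ((p:ℝ)+1)*α = ((p:ℝ)+1)*α from rfl]
        have e1 : Int.fract ((1:ℝ)*α) = α := by
          rw [one_mul]; exact Int.fract_eq_self.mpr ⟨le_of_lt h0, h1⟩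
        rw [e1, hfp]
        have := Int.fract_lt_one ((p:ℝ)*α)
        linarith
      have hm := master hs hirr (by omega : p + 1 ≠ 0) (by omega : (1:ℕ) ≠ 0) hlt
      apply wlt_step
      · show w (p + 0) = w (0 + 0)
        simpa using hwp.trans hw0.symm
      · exact wlt_ext (fun j => by show w (p+1+j) = w (p+(j+1)); congr 1; omega)
          (fun j => by show w (1+j) = w (0+(j+1)); congr 1; omega) hm

/-- type 2 -/
lemma typetwo (hs : HStep w α) (hirr : Irrational α) (h0 : 0 < α) (h1 : α < 1)
    (hw0 : w 0 = true) {p q : ℕ} (hp : p ≠ 0) (hq : q ≠ 0)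
    (hb : w (p-1) = true) (ha : w (q-1) = false) :
    wlt (fun j => w (p+j)) (fun j => w (q+j)) := by
  have hq1 : q - 1 ≠ 0 := by
    intro hc
    rw [hc] at ha; rw [hw0] at ha; exact absurd ha (by simp)
  have h2 : Int.fract ((p:ℝ)*α) ≤ α := theta_after_b hs hirr h0 h1 hp hb (by omega)
  have h3 : α < Int.fract ((q:ℝ)*α) := theta_after_a hs hirr h0 h1 hq hq1 ha
  exact master hs hirr hp hq (lt_of_le_of_lt h2 h3)

/-- Part I-A main result -/
theorem not_overlap_of_char (w : ℕ → Bool) (hw0 : w 0 = true) (α : ℝ)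
    (hirr : Irrational α) (h0 : 0 < α) (h1 : α < 1)
    (hc : ∀ n, w (n+1) = charWord α n) : ¬ Overlap w := by
  have hs : HStep w α := hstep_of_char h0 h1 hc
  rintro ⟨p, q, hseed, hnot⟩
  rcases hseed with ⟨rfl, hp⟩ | ⟨hp, hq, hb, ha⟩
  · exact hnot (typeone hs hirr h0 h1 hw0 hp)
  · exact hnot (typetwo hs hirr h0 h1 hw0 hp hq hb ha)

end CharSide

section Converse
variable {w : ℕ → Bool}

lemma w0_true (H : ¬ Overlap w) : w 0 = true := by
  by_contra hc
  have hw0 : w 0 = false := by simpa using hc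
  apply H
  by_cases hb : ∃ m, w m = true
  · obtain ⟨m, hm⟩ := hb
    have hm0 : m ≠ 0 := by rintro rfl; rw [hw0] at hm; exact absurd hm (by simp)
    refine ⟨m, 0, Or.inl ⟨rfl, hm0⟩, ?_⟩
    rintro ⟨j, hs, ht, hbef⟩
    simp only at hs ht hbef
    cases j with
    | zero => rw [Nat.add_zero] at ht; rw [ht] at hw0; exact absurd hw0 (by simp)
    | succ j =>
        have := hbef 0 (by omega)
        rw [Nat.add_zero, Nat.add_zero] at this
        rw [this] at hm; rw [hm] at hw0; exact absurd hw0 (by simp)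
  · push_neg at hb
    refine ⟨1, 0, Or.inl ⟨rfl, one_ne_zero⟩, ?_⟩
    rintro ⟨j, hs, ht, hbef⟩
    exact absurd ht (by simp [hb])

lemma eq_suffix_overlap : ∀ a b : ℕ, a < b → (∀ j, w (a+j) = w (b+j)) → Overlap w := by
  intro a
  induction a using Nat.strong_induction_on with
  | _ a ih =>
    intro b hab hsuf
    cases a with
    | zero =>
        refine ⟨b, 0, Or.inl ⟨rfl, by omega⟩, ?_⟩
        rintro ⟨j, hs, ht, _⟩
        simp only at hs ht
        rw [← hsuf j] at hs
        rw [hs] at ht; exact absurd ht (by simp)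
    | succ a' =>
        obtain ⟨b', rfl⟩ : ∃ b', b = b' + 1 := ⟨b - 1, by omega⟩
        cases hwa : w a' <;> cases hwb : w b'
        · -- both false: recurse
          apply ih a' (by omega) b' (by omega)
          intro j
          cases j with
          | zero => rw [Nat.add_zero, Nat.add_zero, hwa, hwb]
          | succ j => rw [show a' + (j+1) = a'+1+j by omega, show b' + (j+1) = b'+1+j by omega]
                      exact hsuf j
        · -- w a' false, w b' true : Seed (b'+1, a'+1)
          refine ⟨b'+1, a'+1, Or.inr ⟨by omega, by omega, by simpa using hwb, by simpa using hwa⟩, ?_⟩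
          rintro ⟨j, hs, ht, _⟩
          simp only at hs ht
          rw [← hsuf j] at hs
          rw [hs] at ht; exact absurd ht (by simp)
        · -- w a' true, w b' false : Seed (a'+1, b'+1)
          refine ⟨a'+1, b'+1, Or.inr ⟨by omega, by omega, by simpa using hwa, by simpa using hwb⟩, ?_⟩
          rintro ⟨j, hs, ht, _⟩
          simp only at hs ht
          rw [hsuf j] at hs
          rw [hs] at ht; exact absurd ht (by simp)
        · -- both true: recurse
          apply ih a' (by omega) b' (by omega)
          intro j
          cases j with
          | zero => rw [Nat.add_zero, Nat.add_zero, hwa, hwb]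
          | succ j => rw [show a' + (j+1) = a'+1+j by omega, show b' + (j+1) = b'+1+j by omega]
                      exact hsuf j

lemma window_le_prefix (H : ¬ Overlap w) {i : ℕ} (hi : i ≠ 0) (L : ℕ) :
    cnt w i L ≤ cnt w 0 L := by
  have hwlt : wlt (fun j => w (i+j)) (fun j => w (0+j)) := by
    by_contra hc; exact H ⟨i, 0, Or.inl ⟨rfl, hi⟩, hc⟩
  obtain ⟨j0, hs, ht, hbef⟩ := hwlt
  simp only at hs ht hbef
  by_cases hj : L ≤ j0
  · have : cnt w i L = cnt w 0 L := cnt_congr w (fun t htl => hbef t (by omega))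
    omega
  · have d1 : cnt w i L = cnt w i (j0+1) + cnt w (i+(j0+1)) (L-j0-1) := by
      rw [← cnt_add, show (j0+1)+(L-j0-1) = L by omega]
    have d2 : cnt w 0 L = cnt w 0 (j0+1) + cnt w (0+(j0+1)) (L-j0-1) := by
      rw [← cnt_add, show (j0+1)+(L-j0-1) = L by omega]
    have e1 : cnt w i (j0+1) = cnt w i j0 + wInt w (i+j0) := cnt_succ w i j0
    have e2 : cnt w 0 (j0+1) = cnt w 0 j0 + wInt w (0+j0) := cnt_succ w 0 j0
    have v1 : wInt w (i+j0) = 0 := wInt_false hs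
    have v2 : wInt w (0+j0) = 1 := wInt_true ht
    have heq : cnt w i j0 = cnt w 0 j0 := cnt_congr w hbef
    have hb := balanced w H (L-j0-1) (i+(j0+1)) (0+(j0+1))
    omega

lemma prefix_le_window (H : ¬ Overlap w) (i L : ℕ) :
    cnt w 0 L ≤ cnt w i L + 1 := balanced w H L 0 i

lemma tiling_upper (H : ¬ Overlap w) {N : ℕ} (hN : N ≠ 0) :
    ∀ k : ℕ, k ≠ 0 → cnt w 0 (k*N) ≤ (k:ℤ) * cnt w 0 N := by
  intro k
  induction k with
  | zero => omega
  | succ k ih =>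
      intro _
      by_cases hk : k = 0
      · subst hk; simp
      · have h1 : cnt w 0 ((k+1)*N) = cnt w 0 (k*N) + cnt w (0+k*N) N := by
          rw [← cnt_add, show k*N + N = (k+1)*N by ring]
        have h2 : cnt w (0+k*N) N ≤ cnt w 0 N := by
          rw [Nat.zero_add]
          exact window_le_prefix H (by positivity) N
        have h3 := ih hk
        have h4 : ((k:ℤ)+1) * cnt w 0 N = (k:ℤ) * cnt w 0 N + cnt w 0 N := by ring
        push_cast
        push_cast at h3
        linarith

lemma tiling_lower (H : ¬ Overlap w) {N : ℕ} (hN : N ≠ 0) :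
    ∀ k : ℕ, k ≠ 0 → (k:ℤ) * cnt w 0 N - ((k:ℤ) - 1) ≤ cnt w 0 (k*N) := by
  intro k
  induction k with
  | zero => omega
  | succ k ih =>
      intro _
      by_cases hk : k = 0
      · subst hk; simp
      · have h1 : cnt w 0 ((k+1)*N) = cnt w 0 (k*N) + cnt w (0+k*N) N := by
          rw [← cnt_add, show k*N + N = (k+1)*N by ring]
        have h2 : cnt w 0 N ≤ cnt w (0+k*N) N + 1 := prefix_le_window H _ N
        have h3 := ih hk
        have h4 : ((k:ℤ)+1) * cnt w 0 N = (k:ℤ) * cnt w 0 N + cnt w 0 N := by ring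
        push_cast
        push_cast at h3
        linarith

/-- key pairwise inequality -/
lemma key_ineq (H : ¬ Overlap w) {N M : ℕ} (hN : N ≠ 0) (hM : M ≠ 0) :
    (M:ℤ) * cnt w 0 N ≤ (N:ℤ) * cnt w 0 M + ((M:ℤ) - 1) := by
  have h1 := tiling_lower H hN M hM
  have h2 := tiling_upper H hM N hN
  rw [show N*M = M*N by ring] at h2
  linarith

section Alpha
variable (w)

noncomputable def alphaOf : ℝ :=
  ⨆ n : ℕ, (((cnt w 0 (n+1) : ℤ) : ℝ) - 1)/((n:ℝ)+1)

variable {w}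

lemma alpha_bdd (H : ¬ Overlap w) :
    BddAbove (Set.range (fun n : ℕ => (((cnt w 0 (n+1) : ℤ) : ℝ) - 1)/((n:ℝ)+1))) := by
  refine ⟨1, ?_⟩
  rintro x ⟨n, rfl⟩
  have h1 : cnt w 0 (n+1) ≤ (n:ℤ)+1 := by
    have := cnt_le w 0 (n+1); push_cast at this ⊢; exact this
  have hpos : (0:ℝ) < (n:ℝ)+1 := by positivity
  rw [div_le_one hpos]
  have : ((cnt w 0 (n+1) : ℤ) : ℝ) ≤ (n:ℝ)+1 := by exact_mod_cast h1
  linarith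

lemma alpha_lower (H : ¬ Overlap w) {N : ℕ} (hN : N ≠ 0) :
    ((cnt w 0 N : ℤ) : ℝ) - 1 ≤ (N:ℝ) * alphaOf w := by
  obtain ⟨n, rfl⟩ : ∃ n, N = n + 1 := ⟨N - 1, by omega⟩
  have h := le_ciSup (alpha_bdd H) n
  have hpos : (0:ℝ) < (n:ℝ)+1 := by positivity
  rw [div_le_iff₀ hpos] at h
  calc ((cnt w 0 (n+1) : ℤ) : ℝ) - 1 ≤ alphaOf w * ((n:ℝ)+1) := h
  _ = ((n+1:ℕ):ℝ) * alphaOf w := by push_cast; ring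

lemma alpha_upper (H : ¬ Overlap w) {M : ℕ} (hM : M ≠ 0) :
    (M:ℝ) * alphaOf w ≤ ((cnt w 0 M : ℤ) : ℝ) := by
  have h : alphaOf w ≤ ((cnt w 0 M : ℤ) : ℝ) / (M:ℝ) := by
    apply ciSup_le
    intro n
    have hkey := key_ineq H (show n+1 ≠ 0 by omega) hM
    have hpos1 : (0:ℝ) < (n:ℝ)+1 := by positivity
    have hpos2 : (0:ℝ) < (M:ℝ) := by positivity
    rw [div_le_div_iff₀ hpos1 hpos2]
    have : ((M:ℤ) * cnt w 0 (n+1) : ℝ) ≤ ((n+1:ℤ) * cnt w 0 M + ((M:ℤ) - 1) : ℝ) := by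
      exact_mod_cast hkey
    push_cast at this ⊢
    nlinarith [hpos2]
  have hpos2 : (0:ℝ) < (M:ℝ) := by positivity
  rw [le_div_iff₀ hpos2] at h
  linarith

lemma event_const (f : ℕ → ℤ) (h01 : ∀ k : ℕ, k ≠ 0 → 0 ≤ f k ∧ f k ≤ 1)
    (hmono : (∀ k : ℕ, k ≠ 0 → f (k+1) ≤ f k) ∨ (∀ k : ℕ, k ≠ 0 → f k ≤ f (k+1))) :
    ∃ K : ℕ, K ≠ 0 ∧ ∀ m : ℕ, K ≤ m → f m = f K := by
  rcases hmono with hdec | hinc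
  · by_cases hz : ∃ k : ℕ, k ≠ 0 ∧ f k = 0
    · obtain ⟨k, hk, hfk⟩ := hz
      refine ⟨k, hk, ?_⟩
      have hall : ∀ m, k ≤ m → f m = 0 := by
        intro m hm
        induction m, hm using Nat.le_induction with
        | base => exact hfk
        | succ m hm ih =>
            have h1 := hdec m (by omega)
            have h2 := (h01 (m+1) (by omega)).1
            omega
      intro m hm; rw [hall m hm, hfk]
    · push_neg at hz
      refine ⟨1, one_ne_zero, ?_⟩
      intro m hm
      have h1 : f m = 1 := by
        have := h01 m (by omega); have := hz m (by omega); omega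
      have h2 : f 1 = 1 := by
        have := h01 1 (by omega); have := hz 1 (by omega); omega
      rw [h1, h2]
  · by_cases hz : ∃ k : ℕ, k ≠ 0 ∧ f k = 1
    · obtain ⟨k, hk, hfk⟩ := hz
      refine ⟨k, hk, ?_⟩
      have hall : ∀ m, k ≤ m → f m = 1 := by
        intro m hm
        induction m, hm using Nat.le_induction with
        | base => exact hfk
        | succ m hm ih =>
            have h1 := hinc m (by omega)
            have h2 := (h01 (m+1) (by omega)).2
            omega
      intro m hm; rw [hall m hm, hfk]
    · push_neg at hz
      refine ⟨1, one_ne_zero, ?_⟩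
      intro m hm
      have h1 : f m = 0 := by
        have := h01 m (by omega); have := hz m (by omega); omega
      have h2 : f 1 = 0 := by
        have := h01 1 (by omega); have := hz 1 (by omega); omega
      rw [h1, h2]

lemma alpha_irrational (H : ¬ Overlap w) : Irrational (alphaOf w) := by
  by_contra hirr
  have hrat : ∃ ρ : ℚ, (ρ:ℝ) = alphaOf w := by
    unfold Irrational at hirr
    push_neg at hirr
    simpa [Set.range] using hirr
  obtain ⟨ρ, hρ⟩ := hrat
  set α := alphaOf w with hαdef
  set q := ρ.den with hqdef
  set p := ρ.num with hpdef
  have hq0 : q ≠ 0 := ρ.den_nz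
  have hqα : (q:ℝ) * α = (p:ℝ) := by
    rw [← hρ]
    have h1 : (p:ℚ)/(q:ℚ) = ρ := Rat.num_div_den ρ
    have h2 : (q:ℚ) ≠ 0 := by exact_mod_cast hq0
    have h3 : (q:ℚ) * ρ = (p:ℚ) := by
      field_simp at h1 ⊢
      linarith [h1]
    exact_mod_cast congrArg (Rat.cast : ℚ → ℝ) h3
  -- bounds on multiples
  have hmul : ∀ k : ℕ, ((k*q : ℕ):ℝ) * α = (k:ℝ) * (p:ℝ) := by
    intro k
    push_cast
    rw [mul_assoc, hqα]
  have hbounds : ∀ k : ℕ, k ≠ 0 → (k:ℤ)*p ≤ cnt w 0 (k*q) ∧ cnt w 0 (k*q) ≤ (k:ℤ)*p + 1 := by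
    intro k hk
    have hkq : k*q ≠ 0 := by positivity
    have hl := alpha_lower H hkq
    have hu := alpha_upper H hkq
    rw [hmul k] at hl hu
    constructor
    · exact_mod_cast hu
    · have : ((cnt w 0 (k*q) : ℤ):ℝ) ≤ ((k:ℤ)*p : ℤ) + 1 := by push_cast; linarith
      exact_mod_cast this
  have hwin : ∀ k : ℕ, k ≠ 0 → cnt w 0 q - 1 ≤ cnt w (k*q) q ∧ cnt w (k*q) q ≤ cnt w 0 q := by
    intro k hk
    constructor
    · have := prefix_le_window H (k*q) q; omega
    · exact window_le_prefix H (by positivity) q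
  have hsplit : ∀ k : ℕ, cnt w 0 ((k+1)*q) = cnt w 0 (k*q) + cnt w (k*q) q := by
    intro k
    have := cnt_add w 0 (k*q) q
    rw [Nat.zero_add] at this
    rw [show (k+1)*q = k*q + q by ring, this]
  -- the epsilon function
  set e : ℕ → ℤ := fun k => cnt w 0 (k*q) - (k:ℤ)*p with hedef
  have he01 : ∀ k : ℕ, k ≠ 0 → 0 ≤ e k ∧ e k ≤ 1 := by
    intro k hk
    have := hbounds k hk
    simp only [hedef]
    omega
  have heq1 : cnt w 0 q = p + e 1 := by
    simp only [hedef]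
    rw [show 1*q = q by ring]
    push_cast
    ring
  have he1 := he01 1 one_ne_zero
  have hestep : ∀ k : ℕ, e (k+1) - e k = cnt w (k*q) q - p := by
    intro k
    simp only [hedef]
    rw [hsplit k]
    push_cast
    ring
  have hmono : (∀ k : ℕ, k ≠ 0 → e (k+1) ≤ e k) ∨ (∀ k : ℕ, k ≠ 0 → e k ≤ e (k+1)) := by
    by_cases hc : cnt w 0 q = p
    · left
      intro k hk
      have h1 := hestep k
      have h2 := (hwin k hk).2
      omega
    · right
      intro k hk
      have h1 := hestep k
      have h2 := (hwin k hk).1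
      have h3 : cnt w 0 q = p + 1 := by
        have := he1; simp only [hedef] at this ⊢
        omega
      omega
  obtain ⟨K, hK0, hKconst⟩ := event_const e he01 hmono
  -- the periodicity step
  have hper : ∀ N : ℕ, K*q ≤ N → cnt w 0 (N+q) = cnt w 0 N + p := by
    intro N hN
    have hN0 : N ≠ 0 := by
      intro hc; subst hc
      have : K*q = 0 := by omega
      rcases Nat.mul_eq_zero.mp this with h | h
      · exact hK0 h
      · exact hq0 h
    by_cases hdvd : q ∣ N
    · obtain ⟨k, rfl⟩ := hdvd
      have hkK : K ≤ k := by
        by_contra hc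
        push_neg at hc
        have : q*k < K*q := by
          calc q*k = k*q := by ring
          _ < K*q := by
            apply Nat.mul_lt_mul_of_lt_of_le hc (le_refl q)
            omega
        omega
      have hk0 : k ≠ 0 := by
        intro hc; subst hc; simp at hkK; omega
      have e1 : e (k+1) = e k := by
        rw [hKconst (k+1) (by omega), hKconst k hkK]
      simp only [hedef] at e1
      have hidx1 : q*k + q = (k+1)*q := by ring
      have hidx2 : q*k = k*q := by ring
      rw [hidx1, hidx2]
      push_cast at e1
      have : ((k:ℤ)+1)*p = (k:ℤ)*p + p := by ring
      omega
    · -- N not a multiple of q : floor forced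
      by_contra hd
      have hNq : N + q ≠ 0 := by omega
      have hl1 := alpha_lower H hN0
      have hu1 := alpha_upper H hN0
      have hl2 := alpha_lower H hNq
      have hu2 := alpha_upper H hNq
      have hNqα : ((N+q : ℕ):ℝ) * α = (N:ℝ)*α + (p:ℝ) := by
        push_cast
        rw [add_mul, hqα]
      rw [hNqα] at hl2 hu2
      -- d = cnt w 0 (N+q) - cnt w 0 N is p-1, p, or p+1
      have hcast : ∀ z : ℤ, ((z:ℝ) ≤ (N:ℝ)*α ∧ (N:ℝ)*α ≤ (z:ℝ)) → False := by
        intro z ⟨hz1, hz2⟩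
        have hzeq : (N:ℝ)*α = (z:ℝ) := le_antisymm hz2 hz1
        -- multiply by q: N*p = z*q
        have : (N:ℝ)*(p:ℝ) = (z:ℝ)*(q:ℝ) := by
          rw [← hqα]
          nlinarith [hzeq]
        have hint : (N:ℤ)*p = z*(q:ℤ) := by exact_mod_cast this
        have hdvd2 : (q:ℤ) ∣ (N:ℤ)*p := ⟨z, by linarith [hint]⟩
        have hdvd3 : q ∣ N * p.natAbs := by
          have := Int.natAbs_dvd_natAbs.mpr hdvd2
          simpa [Int.natAbs_mul] using this
        have hcop : Nat.Coprime q p.natAbs := (ρ.reduced).symm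
        exact hdvd (hcop.dvd_of_dvd_mul_right hdvd3)
      have hdint : cnt w 0 (N+q) = cnt w 0 N + p + 1 ∨ cnt w 0 (N+q) = cnt w 0 N + p - 1 := by
        have hi1 : cnt w 0 (N+q) ≤ cnt w 0 N + p + 1 := by
          have hb1 : ((cnt w 0 (N+q) : ℤ):ℝ) ≤ ((cnt w 0 N + p + 1 : ℤ):ℝ) := by
            push_cast; linarith
          exact_mod_cast hb1
        have hi2 : cnt w 0 N + p - 1 ≤ cnt w 0 (N+q) := by
          have hb2 : ((cnt w 0 N + p - 1 : ℤ):ℝ) ≤ ((cnt w 0 (N+q) : ℤ):ℝ) := by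
            push_cast; linarith
          exact_mod_cast hb2
        omega
      rcases hdint with hcase | hcase
      · apply hcast (cnt w 0 N)
        have hce : ((cnt w 0 (N+q) : ℤ):ℝ) = ((cnt w 0 N : ℤ):ℝ) + (p:ℝ) + 1 := by
          rw [hcase]; push_cast; ring
        exact ⟨by linarith, hu1⟩
      · apply hcast (cnt w 0 N - 1)
        have hce : ((cnt w 0 (N+q) : ℤ):ℝ) = ((cnt w 0 N : ℤ):ℝ) + (p:ℝ) - 1 := by
          rw [hcase]; push_cast; ring
        constructor
        · push_cast; linarith
        · push_cast; linarith
  -- now w is eventually periodic with period q : contradiction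
  have hcnt1 : ∀ n : ℕ, wInt w n = cnt w 0 (n+1) - cnt w 0 n := by
    intro n
    have := cnt_succ w 0 n
    rw [Nat.zero_add] at this
    omega
  have hperiod : ∀ n : ℕ, K*q ≤ n → w n = w (n+q) := by
    intro n hn
    apply w_eq_of_wInt
    have h1 := hcnt1 n
    have h2 := hcnt1 (n+q)
    have h3 := hper n hn
    have h4 := hper (n+1) (by omega)
    rw [show n+q+1 = n+1+q by ring] at h2
    omega
  apply H
  apply eq_suffix_overlap (K*q) (K*q+q) (by omega)
  intro j
  rw [show K*q+q+j = (K*q+j)+q by ring]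
  exact hperiod (K*q+j) (by omega)

lemma not_int_mul (hirr : Irrational (alphaOf w)) {N : ℕ} (hN : N ≠ 0) (z : ℤ) :
    (N:ℝ) * alphaOf w ≠ (z:ℝ) := by
  intro hc
  have hN' : (N:ℝ) ≠ 0 := by positivity
  have : alphaOf w = (z:ℝ)/(N:ℝ) := by field_simp; linarith [hc]
  rw [this] at hirr
  have : (((z:ℚ)/(N:ℚ) : ℚ):ℝ) = (z:ℝ)/(N:ℝ) := by push_cast; ring
  rw [← this] at hirr
  exact Rat.not_irrational _ hirr

theorem char_of_not_overlap (w : ℕ → Bool) (H : ¬ Overlap w) :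
    w 0 = true ∧ ∃ α : ℝ, Irrational α ∧ 0 < α ∧ α < 1 ∧ ∀ n, w (n+1) = charWord α n := by
  have hw0 := w0_true H
  have hirr := alpha_irrational H
  set α := alphaOf w with hαdef
  have hfloor : ∀ N : ℕ, N ≠ 0 → ⌊(N:ℝ)*α⌋ = cnt w 0 N - 1 := by
    intro N hN
    have hl := alpha_lower H hN
    have hu := alpha_upper H hN
    have hne := not_int_mul hirr hN (cnt w 0 N)
    have hlt : (N:ℝ)*α < ((cnt w 0 N : ℤ):ℝ) := lt_of_le_of_ne hu hne
    apply Int.floor_eq_iff.mpr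
    constructor
    · push_cast; linarith
    · push_cast; linarith
  have hF1 : cnt w 0 1 = 1 := by
    have h1 := cnt_succ w 0 0
    rw [cnt_zero] at h1
    rw [h1, Nat.add_zero, wInt_true hw0]
    ring
  have hb1l := alpha_lower H (one_ne_zero)
  have hb1u := alpha_upper H (one_ne_zero)
  rw [hF1] at hb1l hb1u
  push_cast at hb1l hb1u
  have h0 : 0 < α := by
    rcases lt_or_eq_of_le (by linarith : (0:ℝ) ≤ α) with h | h
    · exact h
    · exfalso
      rw [← h] at hirr
      have : ((0:ℚ):ℝ) = (0:ℝ) := by norm_num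
      rw [← this] at hirr
      exact Rat.not_irrational _ hirr
  have h1 : α < 1 := by
    rcases lt_or_eq_of_le (by linarith : α ≤ 1) with h | h
    · exact h
    · exfalso
      rw [h] at hirr
      have : ((1:ℚ):ℝ) = (1:ℝ) := by norm_num
      rw [← this] at hirr
      exact Rat.not_irrational _ hirr
  refine ⟨hw0, α, hirr, h0, h1, ?_⟩
  intro n
  have e1 := hfloor (n+2) (by omega)
  have e2 := hfloor (n+1) (by omega)
  rw [show ((n+2:ℕ):ℝ) = (n:ℝ)+2 by push_cast; ring] at e1
  rw [show ((n+1:ℕ):ℝ) = (n:ℝ)+1 by push_cast; ring] at e2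
  have e3 : wInt w (n+1) = cnt w 0 (n+2) - cnt w 0 (n+1) := by
    have := cnt_succ w 0 (n+1)
    rw [Nat.zero_add, show n+1+1 = n+2 by omega] at this
    omega
  cases hwn : w (n+1) with
  | false =>
      have hz : wInt w (n+1) = 0 := wInt_false hwn
      have hP : ¬ (⌊((n:ℝ)+2)*α⌋ - ⌊((n:ℝ)+1)*α⌋ = 1) := by omega
      unfold charWord
      simp [hP]
  | true =>
      have hz : wInt w (n+1) = 1 := wInt_true hwn
      have hP : ⌊((n:ℝ)+2)*α⌋ - ⌊((n:ℝ)+1)*α⌋ = 1 := by omega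
      unfold charWord
      simp [hP]

end Alpha
end Converse

section Rep
variable (k : Type) [Field k] (w : ℕ → Bool)

noncomputable def A1 : (Option {i : ℕ // w i = false} →₀ k) →ₗ[k] (ℕ →₀ k) :=
  Finsupp.lsum k fun o : Option {i : ℕ // w i = false} =>
    match o with
    | none => 0
    | some i => Finsupp.lsingle (i : ℕ)

noncomputable def A2 : (Option {i : ℕ // w i = false} →₀ k) →ₗ[k] (ℕ →₀ k) :=
  Finsupp.lsum k fun o : Option {i : ℕ // w i = false} =>
    match o with
    | none => Finsupp.lsingle 0
    | some i => Finsupp.lsingle ((i : ℕ) + 1)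

noncomputable def B1 : (ℕ →₀ k) →ₗ[k] ({i : ℕ // w i = true} →₀ k) :=
  Finsupp.lsum k fun i : ℕ =>
    if h : w i = true then Finsupp.lsingle (⟨i, h⟩ : {j : ℕ // w j = true}) else 0

noncomputable def B2 : (ℕ →₀ k) →ₗ[k] ({i : ℕ // w i = true} →₀ k) :=
  Finsupp.lsum k fun j : ℕ =>
    if h : 0 < j ∧ w (j - 1) = true
    then Finsupp.lsingle (⟨j - 1, h.2⟩ : {i : ℕ // w i = true}) else 0

lemma M_a1 : (stringModuleAlpha2 k w).a1 = A1 k w := rfl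
lemma M_a2 : (stringModuleAlpha2 k w).a2 = A2 k w := rfl
lemma M_b1 : (stringModuleAlpha2 k w).b1 = B1 k w := rfl
lemma M_b2 : (stringModuleAlpha2 k w).b2 = B2 k w := rfl

variable {k} {w}

lemma a1_some (c : k) (i : {i : ℕ // w i = false}) :
    A1 k w (Finsupp.single (some i) c) = Finsupp.single (i:ℕ) c := by
  simp [A1]

lemma a1_none (c : k) :
    A1 k w (Finsupp.single none c) = 0 := by
  simp [A1]

lemma a2_some (c : k) (i : {i : ℕ // w i = false}) :
    A2 k w (Finsupp.single (some i) c) = Finsupp.single ((i:ℕ)+1) c := by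
  simp [A2]

lemma a2_none (c : k) :
    A2 k w (Finsupp.single none c) = Finsupp.single 0 c := by
  simp [A2]

lemma b1_single (c : k) (n : ℕ) :
    B1 k w (Finsupp.single n c) =
      (if h : w n = true then Finsupp.single (⟨n, h⟩ : {j : ℕ // w j = true}) c else 0) := by
  simp only [B1, Finsupp.lsum_single]
  split <;> simp

lemma b2_single (c : k) (n : ℕ) :
    B2 k w (Finsupp.single n c) =
      (if h : 0 < n ∧ w (n-1) = true
       then Finsupp.single (⟨n-1, h.2⟩ : {j : ℕ // w j = true}) c else 0) := by
  simp only [B2, Finsupp.lsum_single]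
  split <;> simp

-- coordinate lemmas
lemma a1_apply_true (v : Option {i : ℕ // w i = false} →₀ k) {m : ℕ} (hm : w m = true) :
    (A1 k w v) m = 0 := by
  induction v using Finsupp.induction_linear with
  | zero => simp
  | add f g hf hg => rw [map_add, Finsupp.add_apply, hf, hg]; ring
  | single o c =>
      cases o with
      | none => rw [a1_none]; simp
      | some i =>
          rw [a1_some, Finsupp.single_apply]
          split
          · next h => exfalso; have := i.2; rw [h, hm] at this; exact absurd this (by simp)
          · rfl

lemma a1_apply_false (v : Option {i : ℕ // w i = false} →₀ k) {m : ℕ} (hm : w m = false) :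
    (A1 k w v) m = v (some ⟨m, hm⟩) := by
  induction v using Finsupp.induction_linear with
  | zero => simp
  | add f g hf hg => rw [map_add, Finsupp.add_apply, hf, hg, Finsupp.add_apply]
  | single o c =>
      cases o with
      | none => rw [a1_none]; simp [Finsupp.single_apply]
      | some i =>
          rw [a1_some, Finsupp.single_apply, Finsupp.single_apply]
          by_cases h : (i:ℕ) = m
          · rw [if_pos h, if_pos]
            exact congrArg some (Subtype.ext h)
          · rw [if_neg h, if_neg]
            intro hc
            apply h
            have := congrArg (Option.map Subtype.val) hc
            simpa using this

lemma a2_apply_zero (v : Option {i : ℕ // w i = false} →₀ k) :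
    (A2 k w v) 0 = v none := by
  induction v using Finsupp.induction_linear with
  | zero => simp
  | add f g hf hg => rw [map_add, Finsupp.add_apply, hf, hg, Finsupp.add_apply]
  | single o c =>
      cases o with
      | none => rw [a2_none]; simp [Finsupp.single_apply]
      | some i =>
          rw [a2_some, Finsupp.single_apply, Finsupp.single_apply]
          rw [if_neg (by omega), if_neg (by simp)]

lemma a2_apply_succ (v : Option {i : ℕ // w i = false} →₀ k) (m : ℕ) :
    (A2 k w v) (m+1) = (A1 k w v) m := by
  induction v using Finsupp.induction_linear with
  | zero => simp
  | add f g hf hg =>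
      rw [map_add (A2 k w), map_add (A1 k w), Finsupp.add_apply, Finsupp.add_apply, hf, hg]
  | single o c =>
      cases o with
      | none => rw [a2_none, a1_none]; simp [Finsupp.single_apply]
      | some i =>
          rw [a2_some, a1_some, Finsupp.single_apply, Finsupp.single_apply]
          by_cases h : (i:ℕ) = m
          · rw [if_pos (by omega), if_pos h]
          · rw [if_neg (by omega), if_neg h]

lemma b1_apply (v : ℕ →₀ k) {m : ℕ} (hm : w m = true) :
    (B1 k w v) ⟨m, hm⟩ = v m := by
  induction v using Finsupp.induction_linear with
  | zero => simp
  | add f g hf hg => rw [map_add, Finsupp.add_apply, hf, hg, Finsupp.add_apply]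
  | single n c =>
      rw [b1_single, Finsupp.single_apply]
      by_cases h : n = m
      · subst h
        rw [dif_pos hm, Finsupp.single_apply, if_pos rfl, if_pos rfl]
      · by_cases hw : w n = true
        · rw [dif_pos hw, Finsupp.single_apply,
            if_neg (by simp only [Subtype.ext_iff]; exact h), if_neg h]
        · rw [dif_neg hw, if_neg h]; simp

lemma b2_apply (v : ℕ →₀ k) {m : ℕ} (hm : w m = true) :
    (B2 k w v) ⟨m, hm⟩ = v (m+1) := by
  induction v using Finsupp.induction_linear with
  | zero => simp
  | add f g hf hg => rw [map_add, Finsupp.add_apply, hf, hg, Finsupp.add_apply]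
  | single n c =>
      rw [b2_single, Finsupp.single_apply]
      by_cases h : n = m + 1
      · subst h
        rw [dif_pos ⟨by omega, by simpa using hm⟩, Finsupp.single_apply]
        rw [if_pos (by apply Subtype.ext; simp), if_pos rfl]
      · by_cases hw : 0 < n ∧ w (n-1) = true
        · rw [dif_pos hw, Finsupp.single_apply,
            if_neg (by simp only [Subtype.ext_iff]; omega), if_neg h]
        · rw [dif_neg hw, if_neg h]; simp

-- specialized single lemmas
lemma a1_some' (c : k) (n : ℕ) (hn : w n = false) :
    A1 k w (Finsupp.single (some ⟨n, hn⟩) c) = Finsupp.single n c := a1_some c ⟨n, hn⟩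

lemma a2_some' (c : k) (n : ℕ) (hn : w n = false) :
    A2 k w (Finsupp.single (some ⟨n, hn⟩) c) = Finsupp.single (n+1) c := a2_some c ⟨n, hn⟩

end Rep

section Endo
variable {k : Type} [Field k] {w : ℕ → Bool}

noncomputable def hf1 (f : DKHom (stringModuleAlpha2 k w) (stringModuleAlpha2 k w)) :
    (Option {i : ℕ // w i = false} →₀ k) →ₗ[k] (Option {i : ℕ // w i = false} →₀ k) := f.f1
noncomputable def hf2 (f : DKHom (stringModuleAlpha2 k w) (stringModuleAlpha2 k w)) :
    (ℕ →₀ k) →ₗ[k] (ℕ →₀ k) := f.f2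
noncomputable def hf3 (f : DKHom (stringModuleAlpha2 k w) (stringModuleAlpha2 k w)) :
    ({i : ℕ // w i = true} →₀ k) →ₗ[k] ({i : ℕ // w i = true} →₀ k) := f.f3

lemma hcomm_a1 (f : DKHom (stringModuleAlpha2 k w) (stringModuleAlpha2 k w)) :
    (hf2 f).comp (A1 k w) = (A1 k w).comp (hf1 f) := f.comm_a1
lemma hcomm_a2 (f : DKHom (stringModuleAlpha2 k w) (stringModuleAlpha2 k w)) :
    (hf2 f).comp (A2 k w) = (A2 k w).comp (hf1 f) := f.comm_a2
lemma hcomm_b1 (f : DKHom (stringModuleAlpha2 k w) (stringModuleAlpha2 k w)) :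
    (hf3 f).comp (B1 k w) = (B1 k w).comp (hf2 f) := f.comm_b1
lemma hcomm_b2 (f : DKHom (stringModuleAlpha2 k w) (stringModuleAlpha2 k w)) :
    (hf3 f).comp (B2 k w) = (B2 k w).comp (hf2 f) := f.comm_b2

/-- matrix coefficients of the middle component -/
noncomputable def cf (f : DKHom (stringModuleAlpha2 k w) (stringModuleAlpha2 k w))
    (n m : ℕ) : k := (hf2 f (Finsupp.single n 1)) m

variable (f : DKHom (stringModuleAlpha2 k w) (stringModuleAlpha2 k w))

lemma hom_R1 {n m : ℕ} (hn : w n = false) (hm : w m = true) : cf f n m = 0 := by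
  have e := LinearMap.congr_fun (hcomm_a1 f) (Finsupp.single (some ⟨n, hn⟩) 1)
  rw [LinearMap.comp_apply, LinearMap.comp_apply, a1_some'] at e
  unfold cf
  rw [e]
  exact a1_apply_true _ hm

lemma hom_R2 {n : ℕ} (m : ℕ) (hn : w n = false) : cf f (n+1) (m+1) = cf f n m := by
  have e2 := LinearMap.congr_fun (hcomm_a2 f) (Finsupp.single (some ⟨n, hn⟩) 1)
  rw [LinearMap.comp_apply, LinearMap.comp_apply, a2_some'] at e2
  have e1 := LinearMap.congr_fun (hcomm_a1 f) (Finsupp.single (some ⟨n, hn⟩) 1)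
  rw [LinearMap.comp_apply, LinearMap.comp_apply, a1_some'] at e1
  unfold cf
  rw [e2, a2_apply_succ, ← e1]

lemma hom_A0succ (m : ℕ) : cf f 0 (m+1) = 0 := by
  have e2 := LinearMap.congr_fun (hcomm_a2 f) (Finsupp.single none 1)
  rw [LinearMap.comp_apply, LinearMap.comp_apply, a2_none] at e2
  have e1 := LinearMap.congr_fun (hcomm_a1 f) (Finsupp.single none 1)
  rw [LinearMap.comp_apply, LinearMap.comp_apply, a1_none, map_zero] at e1
  unfold cf
  rw [e2, a2_apply_succ, ← e1]
  simp

lemma hom_R3 {n m : ℕ} (hn : w n = true) (hm : w m = true) :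
    cf f (n+1) (m+1) = cf f n m := by
  have hb1x : B1 k w (Finsupp.single n (1:k)) = Finsupp.single ⟨n, hn⟩ 1 := by
    rw [b1_single, dif_pos hn]
  have hb2x : B2 k w (Finsupp.single (n+1) (1:k)) = Finsupp.single ⟨n, hn⟩ 1 := by
    rw [b2_single, dif_pos (⟨by omega, by simpa using hn⟩ : 0 < n+1 ∧ w (n+1-1) = true)]
    congr 1
  have e1 := LinearMap.congr_fun (hcomm_b1 f) (Finsupp.single n (1:k))
  rw [LinearMap.comp_apply, LinearMap.comp_apply, hb1x] at e1
  have e2 := LinearMap.congr_fun (hcomm_b2 f) (Finsupp.single (n+1) (1:k))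
  rw [LinearMap.comp_apply, LinearMap.comp_apply, hb2x] at e2
  have e3 : B1 k w (hf2 f (Finsupp.single n 1)) = B2 k w (hf2 f (Finsupp.single (n+1) 1)) :=
    e1.symm.trans e2
  have e4 := congrArg (fun v => Finsupp.toFun v ⟨m, hm⟩) e3
  unfold cf
  have e5 : (B1 k w (hf2 f (Finsupp.single n 1))) ⟨m, hm⟩ =
      (B2 k w (hf2 f (Finsupp.single (n+1) 1))) ⟨m, hm⟩ := by
    rw [e3]
  rw [b1_apply, b2_apply] at e5
  exact e5.symm

/-- uniqueness: under no-overlap, any solution of the recurrences vanishes -/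
theorem solution_zero (H : ¬ Overlap w) (c : ℕ → ℕ → k)
    (hA : ∀ m, c 0 m = 0)
    (hR1 : ∀ n m, w n = false → w m = true → c n m = 0)
    (hR2 : ∀ n m, w n = false → c (n+1) (m+1) = c n m)
    (hR3 : ∀ n m, w n = true → w m = true → c (n+1) (m+1) = c n m) :
    ∀ n m, c n m = 0 := by
  have fwd : ∀ p q : ℕ, c p q ≠ 0 → ∀ j, (∀ i < j, ¬(w (p+i) = true ∧ w (q+i) = false)) →
      c (p+j) (q+j) ≠ 0 := by
    intro p q hpq j
    induction j with
    | zero => intro _; simpa using hpq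
    | succ j ih =>
        intro hnr
        have hprev := ih (fun i hi => hnr i (by omega))
        have hnres := hnr j (by omega)
        rw [show p+(j+1) = (p+j)+1 by omega, show q+(j+1) = (q+j)+1 by omega]
        cases hwp : w (p+j) with
        | false => rw [hR2 _ _ hwp]; exact hprev
        | true =>
            have hwq : w (q+j) = true := by
              cases hq : w (q+j)
              · exact absurd ⟨hwp, hq⟩ hnres
              · rfl
            rw [hR3 _ _ hwp hwq]; exact hprev
  have notwlt : ∀ p q : ℕ, c p q ≠ 0 → ¬ wlt (fun j => w (p+j)) (fun j => w (q+j)) := by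
    rintro p q hpq ⟨j, hs, ht, heq⟩
    simp only at hs ht heq
    have hnr : ∀ i < j, ¬(w (p+i) = true ∧ w (q+i) = false) := by
      rintro i hi ⟨h1, h2⟩
      rw [heq i hi] at h1
      rw [h1] at h2
      exact absurd h2 (by simp)
    exact fwd p q hpq j hnr (hR1 _ _ hs ht)
  intro n
  induction n using Nat.strong_induction_on with
  | _ n ih =>
    intro m
    by_contra hne
    cases n with
    | zero => exact hne (hA m)
    | succ n' =>
        cases m with
        | zero =>
            exact H ⟨n'+1, 0, Or.inl ⟨rfl, by omega⟩, notwlt _ _ hne⟩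
        | succ m' =>
            by_cases hres : w n' = true ∧ w m' = false
            · exact H ⟨n'+1, m'+1,
                Or.inr ⟨by omega, by omega, by simpa using hres.1, by simpa using hres.2⟩,
                notwlt _ _ hne⟩
            · have hprev : c n' m' ≠ 0 := by
                cases hwp : w n' with
                | false => rw [← hR2 _ _ hwp]; exact hne
                | true =>
                    have hwq : w m' = true := by
                      cases hq : w m'
                      · exact absurd ⟨hwp, hq⟩ hres
                      · rfl
                    rw [← hR3 _ _ hwp hwq]; exact hne
              exact absurd (ih n' (by omega) m') hprev

/-- scalar endomorphism -/
noncomputable def smulIdHom {k : Type} [Field k] (M : DKRep k) (t : k) : DKHom M M where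
  f1 := t • LinearMap.id
  f2 := t • LinearMap.id
  f3 := t • LinearMap.id
  comm_a1 := by
    rw [LinearMap.smul_comp, LinearMap.comp_smul, LinearMap.id_comp, LinearMap.comp_id]
  comm_a2 := by
    rw [LinearMap.smul_comp, LinearMap.comp_smul, LinearMap.id_comp, LinearMap.comp_id]
  comm_b1 := by
    rw [LinearMap.smul_comp, LinearMap.comp_smul, LinearMap.id_comp, LinearMap.comp_id]
  comm_b2 := by
    rw [LinearMap.smul_comp, LinearMap.comp_smul, LinearMap.id_comp, LinearMap.comp_id]

/-- difference of homomorphisms -/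
noncomputable def subHom {k : Type} [Field k] {M N : DKRep k} (f g : DKHom M N) : DKHom M N where
  f1 := f.f1 - g.f1
  f2 := f.f2 - g.f2
  f3 := f.f3 - g.f3
  comm_a1 := by rw [LinearMap.sub_comp, LinearMap.comp_sub, f.comm_a1, g.comm_a1]
  comm_a2 := by rw [LinearMap.sub_comp, LinearMap.comp_sub, f.comm_a2, g.comm_a2]
  comm_b1 := by rw [LinearMap.sub_comp, LinearMap.comp_sub, f.comm_b1, g.comm_b1]
  comm_b2 := by rw [LinearMap.sub_comp, LinearMap.comp_sub, f.comm_b2, g.comm_b2]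

lemma bij_smul_id {k : Type} [Field k] {V : Type} [AddCommGroup V] [Module k V]
    {t : k} (ht : t ≠ 0) :
    Function.Bijective (t • (LinearMap.id : V →ₗ[k] V)) := by
  constructor
  · intro x y hxy
    simp only [LinearMap.smul_apply, LinearMap.id_apply] at hxy
    exact smul_right_injective V ht hxy
  · intro y
    refine ⟨t⁻¹ • y, ?_⟩
    simp only [LinearMap.smul_apply, LinearMap.id_apply, smul_smul]
    rw [mul_inv_cancel₀ ht, one_smul]

theorem brick_of_not_overlap {k : Type} [Field k] {w : ℕ → Bool} (H : ¬ Overlap w) :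
    IsBrick (stringModuleAlpha2 k w) := by
  intro f hne
  set t : k := cf f 0 0 with htdef
  set g := subHom f (smulIdHom (stringModuleAlpha2 k w) t) with hgdef
  -- coefficients of g
  have hgf2 : hf2 g = hf2 f - t • LinearMap.id := rfl
  have hcg : ∀ n m, cf g n m = cf f n m - t * (if n = m then 1 else 0) := by
    intro n m
    unfold cf
    rw [hgf2]
    simp only [LinearMap.sub_apply, Finsupp.sub_apply, LinearMap.smul_apply,
      LinearMap.id_apply, Finsupp.smul_apply, Finsupp.single_apply, smul_eq_mul]
  have hAg : ∀ m, cf g 0 m = 0 := by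
    intro m
    cases m with
    | zero => rw [hcg]; simp [htdef]
    | succ m' => rw [hcg, hom_A0succ]; simp
  have hz : ∀ n m, cf g n m = 0 :=
    solution_zero H (cf g) hAg (fun n m hn hm => hom_R1 g hn hm)
      (fun n m hn => hom_R2 g m hn) (fun n m hn hm => hom_R3 g hn hm)
  -- g.f2 = 0
  have hg2 : hf2 g = 0 := by
    apply Finsupp.lhom_ext
    intro n b
    have h1 : (Finsupp.single n b : ℕ →₀ k) = b • Finsupp.single n (1:k) := by
      rw [Finsupp.smul_single, smul_eq_mul, mul_one]
    rw [h1, map_smul]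
    have h2 : hf2 g (Finsupp.single n 1) = 0 := by
      apply Finsupp.ext
      intro m
      exact hz n m
    rw [h2, smul_zero]
    simp
  -- g.f1 = 0
  have hg1 : hf1 g = 0 := by
    apply LinearMap.ext
    intro v
    have e1 : A1 k w (hf1 g v) = 0 := by
      rw [← LinearMap.comp_apply, ← hcomm_a1 g, LinearMap.comp_apply, hg2]
      simp
    have e2 : A2 k w (hf1 g v) = 0 := by
      rw [← LinearMap.comp_apply, ← hcomm_a2 g, LinearMap.comp_apply, hg2]
      simp
    apply Finsupp.ext
    intro o
    cases o with
    | none =>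
        have := a2_apply_zero (hf1 g v)
        rw [e2] at this
        simpa using this.symm
    | some i =>
        obtain ⟨m, hm⟩ := i
        have := a1_apply_false (hf1 g v) hm
        rw [e1] at this
        simpa using this.symm
  -- g.f3 = 0
  have hg3 : hf3 g = 0 := by
    apply Finsupp.lhom_ext
    intro z b
    obtain ⟨n, hn⟩ := z
    have hb1x : B1 k w (Finsupp.single n b) = Finsupp.single ⟨n, hn⟩ b := by
      rw [b1_single, dif_pos hn]
    rw [← hb1x, ← LinearMap.comp_apply, hcomm_b1 g, LinearMap.comp_apply, hg2]
    simp
  -- components of f are t • id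
  have hf1eq : hf1 f = t • LinearMap.id :=
    sub_eq_zero.mp (show hf1 f - t • LinearMap.id = 0 from hg1)
  have hf2eq : hf2 f = t • LinearMap.id :=
    sub_eq_zero.mp (show hf2 f - t • LinearMap.id = 0 from hg2)
  have hf3eq : hf3 f = t • LinearMap.id :=
    sub_eq_zero.mp (show hf3 f - t • LinearMap.id = 0 from hg3)
  -- t ≠ 0
  have ht : t ≠ 0 := by
    intro ht0
    rw [ht0, zero_smul] at hf1eq hf2eq hf3eq
    rcases hne with h | h | h
    · exact h hf1eq
    · exact h hf2eq
    · exact h hf3eq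
  refine ⟨?_, ?_, ?_⟩
  · have : Function.Bijective (hf1 f) := hf1eq ▸ bij_smul_id ht
    exact this
  · have : Function.Bijective (hf2 f) := hf2eq ▸ bij_smul_id ht
    exact this
  · have : Function.Bijective (hf3 f) := hf3eq ▸ bij_smul_id ht
    exact this

end Endo

section Construct
variable {k : Type} [Field k] {w : ℕ → Bool}

def NRes (w : ℕ → Bool) (p q j : ℕ) : Prop := ∀ i < j, ¬(w (p+i) = true ∧ w (q+i) = false)

instance (w : ℕ → Bool) (p q j : ℕ) : Decidable (NRes w p q j) := by
  unfold NRes; infer_instance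

def Cond (w : ℕ → Bool) (p q n : ℕ) : Prop := p ≤ n ∧ NRes w p q (n - p)

instance (w : ℕ → Bool) (p q n : ℕ) : Decidable (Cond w p q n) := by
  unfold Cond; infer_instance

lemma legal_of_not_wlt {p q : ℕ}
    (h : ¬ wlt (fun j => w (p+j)) (fun j => w (q+j))) :
    ∀ j, NRes w p q j → ¬(w (p+j) = false ∧ w (q+j) = true) := by
  intro j
  induction j using Nat.strong_induction_on with
  | _ j ih =>
    rintro hnr ⟨hb1, hb2⟩
    by_cases heq : ∀ i < j, w (p+i) = w (q+i)
    · exact h ⟨j, hb1, hb2, heq⟩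
    · push_neg at heq
      obtain ⟨i, hi, hne⟩ := heq
      have hbad : w (p+i) = false ∧ w (q+i) = true := by
        have hres := hnr i hi
        cases hwp : w (p+i) <;> cases hwq : w (q+i)
        · exact absurd (hwp.trans hwq.symm) hne
        · exact ⟨rfl, rfl⟩
        · exact absurd ⟨hwp, hwq⟩ hres
        · exact absurd (hwp.trans hwq.symm) hne
      exact ih i hi (fun i' hi' => hnr i' (by omega)) hbad

theorem not_brick_of_overlap (HO : Overlap w) : ¬ IsBrick (stringModuleAlpha2 k w) := by
  classical
  obtain ⟨p, q, hseed, hnot⟩ := HO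
  have L := legal_of_not_wlt hnot
  have hp : p ≠ 0 := by
    rcases hseed with ⟨_, hp⟩ | ⟨hp, _, _, _⟩ <;> exact hp
  have hqs : q = 0 ∨ (q ≠ 0 ∧ w (p-1) = true ∧ w (q-1) = false) := by
    rcases hseed with ⟨hq, _⟩ | ⟨_, hq, h1, h2⟩
    · exact Or.inl hq
    · exact Or.inr ⟨hq, h1, h2⟩
  have K1 : ¬ Cond w p q 0 := by
    rintro ⟨h, _⟩; exact hp (by omega)
  have K2 : ∀ n, Cond w p q n → w n = false → w (q + (n-p)) = false := by
    rintro n ⟨hpn, hnr⟩ hw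
    have hL := L (n-p) hnr
    rw [show p + (n-p) = n by omega] at hL
    cases hq : w (q + (n-p))
    · rfl
    · exact absurd ⟨hw, hq⟩ hL
  have K3 : ∀ n, Cond w p q n → ¬(w n = true ∧ w (q + (n-p)) = false) → Cond w p q (n+1) := by
    rintro n ⟨hpn, hnr⟩ hres
    refine ⟨by omega, ?_⟩
    intro i hi
    rw [show n+1-p = (n-p)+1 by omega] at hi
    rcases Nat.lt_succ_iff_lt_or_eq.mp hi with h | h
    · exact hnr i h
    · subst h
      rw [show p + (n-p) = n by omega]
      exact hres
  have K4 : ∀ n, Cond w p q (n+1) → p ≤ n → Cond w p q n := by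
    rintro n ⟨_, hnr⟩ hpn
    refine ⟨hpn, fun i hi => hnr i ?_⟩
    omega
  have K5 : Cond w p q p := by
    refine ⟨le_refl p, ?_⟩
    intro i hi
    omega
  intro hB
  -- the three components
  set F2 : (ℕ →₀ k) →ₗ[k] (ℕ →₀ k) :=
    Finsupp.lsum k (fun n => if Cond w p q n then Finsupp.lsingle (q + (n - p)) else 0)
    with hF2def
  set F1 : (Option {i : ℕ // w i = false} →₀ k) →ₗ[k] (Option {i : ℕ // w i = false} →₀ k) :=
    Finsupp.lsum k (fun o : Option {i : ℕ // w i = false} =>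
      match o with
      | none => 0
      | some i =>
          (if h : Cond w p q i.1 ∧ w (q + (i.1 - p)) = false
           then Finsupp.lsingle (some ⟨q + (i.1 - p), h.2⟩) else 0)
          + (if Cond w p q (i.1+1) ∧ q + (i.1+1-p) = 0 then Finsupp.lsingle none else 0))
    with hF1def
  set F3 : ({i : ℕ // w i = true} →₀ k) →ₗ[k] ({i : ℕ // w i = true} →₀ k) :=
    Finsupp.lsum k (fun z : {i : ℕ // w i = true} =>
      if h : Cond w p q z.1 ∧ w (q + (z.1 - p)) = true
      then Finsupp.lsingle (⟨q + (z.1 - p), h.2⟩ : {i : ℕ // w i = true}) else 0)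
    with hF3def
  -- single application lemmas
  have hF2s : ∀ (n : ℕ) (b : k), F2 (Finsupp.single n b) =
      (if Cond w p q n then Finsupp.single (q + (n-p)) b else 0) := by
    intro n b
    rw [hF2def, Finsupp.lsum_single]
    split <;> simp
  have hF1n : ∀ b : k, F1 (Finsupp.single none b) = 0 := by
    intro b
    rw [hF1def, Finsupp.lsum_single]
    rfl
  have hF1s : ∀ (n : ℕ) (hn : w n = false) (b : k),
      F1 (Finsupp.single (some ⟨n, hn⟩) b) =
        (if h : Cond w p q n ∧ w (q + (n - p)) = false
         then Finsupp.single (some ⟨q + (n - p), h.2⟩) b else 0)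
        + (if Cond w p q (n+1) ∧ q + (n+1-p) = 0 then Finsupp.single none b else 0) := by
    intro n hn b
    rw [hF1def, Finsupp.lsum_single]
    simp only [LinearMap.add_apply]
    congr 1
    · split <;> simp
    · split <;> simp
  have hF3s : ∀ (n : ℕ) (hn : w n = true) (b : k),
      F3 (Finsupp.single (⟨n, hn⟩ : {i : ℕ // w i = true}) b) =
        (if h : Cond w p q n ∧ w (q + (n - p)) = true
         then Finsupp.single (⟨q + (n - p), h.2⟩ : {i : ℕ // w i = true}) b else 0) := by
    intro n hn b
    rw [hF3def, Finsupp.lsum_single]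
    split <;> simp
  -- commutation with a1
  have hcA : F2.comp (A1 k w) = (A1 k w).comp F1 := by
    apply Finsupp.lhom_ext
    intro o b
    rw [LinearMap.comp_apply, LinearMap.comp_apply]
    cases o with
    | none =>
        rw [a1_none, map_zero, hF1n, map_zero]
    | some i =>
        obtain ⟨n, hn⟩ := i
        rw [a1_some', hF2s, hF1s n hn b, map_add]
        have h2 : (A1 k w) (if Cond w p q (n+1) ∧ q + (n+1-p) = 0
            then Finsupp.single none b else 0) = 0 := by
          split
          · rw [a1_none]
          · rw [map_zero]
        rw [h2, add_zero]
        by_cases hcn : Cond w p q n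
        · have hwf := K2 n hcn hn
          rw [if_pos hcn, dif_pos ⟨hcn, hwf⟩, a1_some']
        · rw [if_neg hcn, dif_neg (fun hc => hcn hc.1), map_zero]
  -- commutation with a2
  have hcB : F2.comp (A2 k w) = (A2 k w).comp F1 := by
    apply Finsupp.lhom_ext
    intro o b
    rw [LinearMap.comp_apply, LinearMap.comp_apply]
    cases o with
    | none =>
        rw [a2_none, hF1n, map_zero, hF2s, if_neg K1]
    | some i =>
        obtain ⟨n, hn⟩ := i
        rw [a2_some', hF2s, hF1s n hn b, map_add]
        by_cases hc1 : Cond w p q (n+1)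
        · rw [if_pos hc1]
          by_cases hpn : p ≤ n
          · have hcn : Cond w p q n := K4 n hc1 hpn
            have hwf := K2 n hcn hn
            rw [dif_pos ⟨hcn, hwf⟩, a2_some']
            have hq0 : ¬ (Cond w p q (n+1) ∧ q + (n+1-p) = 0) := by
              rintro ⟨_, hz⟩; omega
            rw [if_neg hq0, map_zero, add_zero]
            have hidx : q + (n+1-p) = q + (n-p) + 1 := by omega
            rw [hidx]
          · have hpe : p = n+1 := by
              have := hc1.1; omega
            have hdn : ¬ (Cond w p q n ∧ w (q + (n - p)) = false) := by
              rintro ⟨⟨h, _⟩, _⟩; omega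
            rw [dif_neg hdn, map_zero, zero_add]
            rcases hqs with hq0 | ⟨hqne, hwp1, _⟩
            · rw [if_pos ⟨hc1, by omega⟩, a2_none]
              congr 1
              omega
            · exfalso
              rw [hpe] at hwp1
              simp only [Nat.add_sub_cancel] at hwp1
              rw [hwp1] at hn
              exact absurd hn (by simp)
        · rw [if_neg hc1]
          have hdn : ¬ (Cond w p q n ∧ w (q + (n - p)) = false) := by
            rintro ⟨hcn, _⟩
            exact hc1 (K3 n hcn (fun hc => by rw [hn] at hc; exact absurd hc.1 (by simp)))
          rw [dif_neg hdn, map_zero, zero_add]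
          rw [if_neg (fun hc => hc1 hc.1), map_zero]
  -- commutation with b1
  have hcC : F3.comp (B1 k w) = (B1 k w).comp F2 := by
    apply Finsupp.lhom_ext
    intro n b
    rw [LinearMap.comp_apply, LinearMap.comp_apply, b1_single, hF2s]
    by_cases hw : w n = true
    · rw [dif_pos hw, hF3s n hw b]
      by_cases hcn : Cond w p q n
      · rw [if_pos hcn, b1_single]
        by_cases hwt : w (q + (n-p)) = true
        · rw [dif_pos ⟨hcn, hwt⟩, dif_pos hwt]
        · rw [dif_neg (fun hc => hwt hc.2), dif_neg hwt]
      · rw [if_neg hcn, dif_neg (fun hc => hcn hc.1), map_zero]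
    · rw [dif_neg hw, map_zero]
      by_cases hcn : Cond w p q n
      · rw [if_pos hcn, b1_single]
        have hwf := K2 n hcn (by simpa using hw)
        rw [dif_neg (by rw [hwf]; simp)]
      · rw [if_neg hcn, map_zero]
  -- commutation with b2
  have hcD : F3.comp (B2 k w) = (B2 k w).comp F2 := by
    apply Finsupp.lhom_ext
    intro n b
    rw [LinearMap.comp_apply, LinearMap.comp_apply, b2_single, hF2s]
    cases n with
    | zero =>
        rw [dif_neg (by omega), map_zero, if_neg K1, map_zero]
    | succ n' =>
        by_cases hw : w n' = true
        · rw [dif_pos (⟨by omega, by simpa using hw⟩ : 0 < n'+1 ∧ w (n'+1-1) = true)]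
          have hsimp : (⟨n'+1-1, (⟨by omega, by simpa using hw⟩ : 0 < n'+1 ∧ w (n'+1-1) = true).2⟩ :
              {i : ℕ // w i = true}) = ⟨n', hw⟩ := by
            apply Subtype.ext
            simp
          rw [hsimp, hF3s n' hw b]
          by_cases hA : Cond w p q n' ∧ w (q + (n' - p)) = true
          · rw [dif_pos hA]
            have hc1 : Cond w p q (n'+1) :=
              K3 n' hA.1 (fun hc => by rw [hA.2] at hc; exact absurd hc.2 (by simp))
            rw [if_pos hc1, b2_single]
            have hple : p ≤ n' := hA.1.1
            have hidx : q + (n'+1-p) = q + (n'-p) + 1 := by omega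
            rw [hidx]
            rw [dif_pos (⟨by omega, by simpa using hA.2⟩ : 0 < q+(n'-p)+1 ∧ w (q+(n'-p)+1-1) = true)]
            congr 1
          · rw [dif_neg hA]
            by_cases hc1 : Cond w p q (n'+1)
            · rw [if_pos hc1, b2_single]
              by_cases hpn : p ≤ n'
              · have hcn : Cond w p q n' := K4 n' hc1 hpn
                have hwne : ¬ w (q + (n'-p)) = true := fun hc => hA ⟨hcn, hc⟩
                have hidx : q + (n'+1-p) = q + (n'-p) + 1 := by omega
                rw [hidx]
                rw [dif_neg (by rintro ⟨_, hc⟩; rw [Nat.add_sub_cancel] at hc; exact hwne hc)]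
              · have hpe : p = n'+1 := by have := hc1.1; omega
                have hidx : q + (n'+1-p) = q := by omega
                rw [hidx]
                rcases hqs with hq0 | ⟨hqne, _, hwq1⟩
                · rw [dif_neg (by omega)]
                · rw [dif_neg (by rw [hwq1]; simp)]
            · rw [if_neg hc1, map_zero]
        · rw [dif_neg (by rintro ⟨_, hc⟩; rw [Nat.add_sub_cancel] at hc; exact hw hc), map_zero]
          by_cases hc1 : Cond w p q (n'+1)
          · rw [if_pos hc1, b2_single]
            by_cases hpn : p ≤ n'
            · have hcn : Cond w p q n' := K4 n' hc1 hpn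
              have hwf := K2 n' hcn (by simpa using hw)
              have hidx : q + (n'+1-p) = q + (n'-p) + 1 := by omega
              rw [hidx]
              rw [dif_neg (by
                rintro ⟨_, hc⟩
                rw [Nat.add_sub_cancel, hwf] at hc
                exact absurd hc (by simp))]
            · have hpe : p = n'+1 := by have := hc1.1; omega
              have hidx : q + (n'+1-p) = q := by omega
              rw [hidx]
              rcases hqs with hq0 | ⟨hqne, hwp1, _⟩
              · rw [dif_neg (by omega)]
              · exfalso
                rw [hpe] at hwp1
                simp only [Nat.add_sub_cancel] at hwp1
                rw [hwp1] at hw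
                exact hw rfl
          · rw [if_neg hc1, map_zero]
  -- assemble the morphism
  set f : DKHom (stringModuleAlpha2 k w) (stringModuleAlpha2 k w) :=
    ⟨F1, F2, F3, hcA, hcB, hcC, hcD⟩ with hfdef
  -- f2 is nonzero
  have hf2p : F2 (Finsupp.single p (1:k)) = Finsupp.single q 1 := by
    rw [hF2s, if_pos K5]
    congr 1
    omega
  have hfne : f.f2 ≠ 0 := by
    intro hzero
    have h' := LinearMap.congr_fun hzero (Finsupp.single p (1:k))
    change f.f2 (Finsupp.single p (1:k)) = 0 at h'
    have h'' : F2 (Finsupp.single p (1:k)) = 0 := h'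
    rw [hf2p] at h''
    exact one_ne_zero (Finsupp.single_eq_zero.mp h'')
  have hbij := (hB f (Or.inr (Or.inl hfne))).2.1
  have h0 : F2 (Finsupp.single 0 (1:k)) = 0 := by
    rw [hF2s, if_neg K1]
  have h0' : F2 (Finsupp.single 0 (1:k)) = F2 0 := by rw [h0, map_zero]
  have h0'' : (Finsupp.single 0 (1:k) : ℕ →₀ k) = 0 := hbij.1 h0'
  exact one_ne_zero (Finsupp.single_eq_zero.mp h0'')

end Construct

theorem brick_alpha2w_iff (k : Type) [Field k] (w : ℕ → Bool) :
    IsBrick (stringModuleAlpha2 k w) ↔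
      (w 0 = true ∧ ∃ α : ℝ, Irrational α ∧ 0 < α ∧ α < 1 ∧
        (fun n => w (n + 1)) = charWord α) := by
  constructor
  · intro hB
    have H : ¬ Overlap w := fun ho => not_brick_of_overlap ho hB
    obtain ⟨hw0, α, hirr, h0, h1, hc⟩ := char_of_not_overlap w H
    exact ⟨hw0, α, hirr, h0, h1, funext hc⟩
  · rintro ⟨hw0, α, hirr, h0, h1, hc⟩
    have hc' : ∀ n, w (n+1) = charWord α n := fun n => congrFun hc n
    exact brick_of_not_overlap (not_overlap_of_char w hw0 α hirr h0 h1 hc')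

end StringBricks
end

section
/- Let w : ℕ → {a,b} be an aperiodic right-infinite binary word. Then the three words w, a·w and b·w are all balanced if and only if there exists an irrational α ∈ (0,1) such that w equals the characteristic word c_α of slope α. (This is the combinatorial content of the paper's lemma that a right-infinite aperiodic string in Str(a,b) is a strong inner brick if and only if it is a characteristic Sturmian word.) -/
/-!
STATEMENT 3: Let `w` be an aperiodic right-infinite binary word (`a = false`,
`b = true`). Then `w`, `a·w` and `b·w` are all balanced if and only if there
exists an irrational `α ∈ (0,1)` such that `w` is the characteristic word of
slope `α`.
-/

namespace StringBricks

def IsFactor (w : ℕ → Bool) (u : List Bool) : Prop :=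
  ∃ i : ℕ, ∀ j : Fin u.length, w (i + j) = u.get j

def BalancedWord (w : ℕ → Bool) : Prop :=
  ∀ u v : List Bool, IsFactor w u → IsFactor w v → u.length = v.length →
    |(u.count true : ℤ) - (v.count true : ℤ)| ≤ 1

def EventuallyPeriodic (w : ℕ → Bool) : Prop :=
  ∃ N p : ℕ, 1 ≤ p ∧ ∀ n : ℕ, N ≤ n → w (n + p) = w n

/-- The word `ℓ·w` obtained by prepending the letter `ℓ` to `w`. -/
def consWord (ℓ : Bool) (w : ℕ → Bool) : ℕ → Bool :=
  fun n => match n with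
  | 0 => ℓ
  | n + 1 => w n

lemma count_true_int (l : List Bool) :
    (l.count true : ℤ) = ∑ j : Fin l.length, (if l.get j then 1 else 0) := by
  induction l with
  | nil => simp
  | cons x t ih =>
      rw [List.count_cons]
      simp only [List.length_cons, Fin.sum_univ_succ, List.get]
      push_cast [ih]
      cases x <;> simp <;> ring

lemma factor_count (v : ℕ → Bool) (u : List Bool) (i : ℕ)
    (h : ∀ j : Fin u.length, v (i + j) = u.get j) :
    (u.count true : ℤ) = ∑ j ∈ Finset.range u.length, (if v (i + j) then 1 else 0) := by
  rw [count_true_int, ← Fin.sum_univ_eq_sum_range (fun k => if v (i + k) then (1:ℤ) else 0)]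
  exact Finset.sum_congr rfl (fun j _ => by rw [← h j])

lemma factor_count_F (v : ℕ → Bool) (F : ℕ → ℤ)
    (hv : ∀ n, (if v n then (1:ℤ) else 0) = F (n+1) - F n)
    (u : List Bool) (i : ℕ) (h : ∀ j : Fin u.length, v (i + j) = u.get j) :
    (u.count true : ℤ) = F (i + u.length) - F i := by
  rw [factor_count v u i h]
  rw [Finset.sum_congr rfl (fun j _ => hv (i+j))]
  have h2 := Finset.sum_range_sub (fun j => F (i + j)) u.length
  simp only [add_zero] at h2
  rw [← h2]
  exact Finset.sum_congr rfl (fun j _ => by rw [show i + j + 1 = i + (j+1) by omega])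

lemma balancedWord_of_F (v : ℕ → Bool) (F g : ℕ → ℤ)
    (hv : ∀ n, (if v n then (1:ℤ) else 0) = F (n+1) - F n)
    (hF : ∀ i m, g m ≤ F (i+m) - F i ∧ F (i+m) - F i ≤ g m + 1) :
    BalancedWord v := by
  intro u u' hu hu' hlen
  obtain ⟨i, hi⟩ := hu
  obtain ⟨i', hi'⟩ := hu'
  rw [factor_count_F v F hv u i hi, factor_count_F v F hv u' i' hi', hlen]
  have h1 := hF i u'.length
  have h2 := hF i' u'.length
  rw [abs_le]
  omega


lemma floor_add_bounds (x y : ℝ) :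
    ⌊x⌋ + ⌊y⌋ ≤ ⌊x + y⌋ ∧ ⌊x + y⌋ ≤ ⌊x⌋ + ⌊y⌋ + 1 := by
  constructor
  · exact Int.le_floor.mpr (by push_cast; exact add_le_add (Int.floor_le x) (Int.floor_le y))
  · have h : x + y < ((⌊x⌋ + ⌊y⌋ + 2 : ℤ) : ℝ) := by
      push_cast
      have := Int.lt_floor_add_one x; have := Int.lt_floor_add_one y; linarith
    have := Int.floor_lt.mpr h
    omega

lemma ceil_add_bounds (x y : ℝ) :
    ⌈x⌉ + ⌈y⌉ - 1 ≤ ⌈x + y⌉ ∧ ⌈x + y⌉ ≤ ⌈x⌉ + ⌈y⌉ := by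
  constructor
  · have h : ((⌈x⌉ + ⌈y⌉ - 2 : ℤ) : ℝ) < x + y := by
      push_cast
      have := Int.ceil_lt_add_one x; have := Int.ceil_lt_add_one y; linarith
    have := Int.lt_ceil.mpr h
    omega
  · exact Int.ceil_add_le x y

lemma ceil_irr (x : ℝ) (hx : Irrational x) : ⌈x⌉ = ⌊x⌋ + 1 := by
  have h1 : (⌊x⌋ : ℝ) < x := lt_of_le_of_ne (Int.floor_le x) (Ne.symm (hx.ne_int ⌊x⌋))
  have h2 : x ≤ (⌊x⌋ : ℝ) + 1 := (Int.lt_floor_add_one x).le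
  refine Int.ceil_eq_iff.mpr ⟨?_, ?_⟩ <;> push_cast <;> linarith

lemma charWord_if (α : ℝ) (h0 : 0 < α) (h1 : α < 1) (n : ℕ) :
    (if charWord α n then (1:ℤ) else 0) = ⌊((n:ℝ)+2)*α⌋ - ⌊((n:ℝ)+1)*α⌋ := by
  have hle : ⌊((n:ℝ)+1)*α⌋ ≤ ⌊((n:ℝ)+2)*α⌋ := by
    apply Int.floor_le_floor; nlinarith [Nat.cast_nonneg (α := ℝ) n]
  have hlt : ⌊((n:ℝ)+2)*α⌋ ≤ ⌊((n:ℝ)+1)*α⌋ + 1 := by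
    calc ⌊((n:ℝ)+2)*α⌋ ≤ ⌊((n:ℝ)+1)*α + 1⌋ := by
            apply Int.floor_le_floor; nlinarith
      _ = ⌊((n:ℝ)+1)*α⌋ + 1 := by rw [Int.floor_add_one]
  unfold charWord
  by_cases hc : ⌊((n:ℝ)+2)*α⌋ - ⌊((n:ℝ)+1)*α⌋ = 1
  · simp [hc]
  · have h0' : ⌊((n:ℝ)+2)*α⌋ - ⌊((n:ℝ)+1)*α⌋ = 0 := by omega
    simp [hc, h0']

lemma balanced_charWord (α : ℝ) (h0 : 0 < α) (h1 : α < 1) :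
    BalancedWord (charWord α) := by
  apply balancedWord_of_F (charWord α) (fun n => ⌊((n:ℝ)+1)*α⌋) (fun m => ⌊(m:ℝ)*α⌋)
  · intro n
    rw [charWord_if α h0 h1 n]
    congr 2
    push_cast; ring
  · intro i m
    have key : ⌊(((i+m:ℕ):ℝ)+1)*α⌋ = ⌊((i:ℝ)+1)*α + (m:ℝ)*α⌋ := by
      congr 1; push_cast; ring
    have hb := floor_add_bounds (((i:ℝ)+1)*α) ((m:ℝ)*α)
    constructor <;> omega

lemma balanced_cons_false (α : ℝ) (h0 : 0 < α) (h1 : α < 1) :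
    BalancedWord (consWord false (charWord α)) := by
  apply balancedWord_of_F _ (fun n => ⌊(n:ℝ)*α⌋) (fun m => ⌊(m:ℝ)*α⌋)
  · intro n
    match n with
    | 0 =>
      have : ⌊α⌋ = 0 := Int.floor_eq_zero_iff.mpr ⟨h0.le, h1⟩
      simp [consWord, this]
    | Nat.succ n =>
      show (if charWord α n then (1:ℤ) else 0) = _
      rw [charWord_if α h0 h1 n]
      congr 2 <;> (congr 1; push_cast; ring)
  · intro i m
    have key : ⌊((i+m:ℕ):ℝ)*α⌋ = ⌊(i:ℝ)*α + (m:ℝ)*α⌋ := by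
      congr 1; push_cast; ring
    have hb := floor_add_bounds ((i:ℝ)*α) ((m:ℝ)*α)
    constructor <;> omega

lemma balanced_cons_true (α : ℝ) (hα : Irrational α) (h0 : 0 < α) (h1 : α < 1) :
    BalancedWord (consWord true (charWord α)) := by
  apply balancedWord_of_F _ (fun n => ⌈(n:ℝ)*α⌉) (fun m => ⌈(m:ℝ)*α⌉ - 1)
  · intro n
    match n with
    | 0 =>
      have : ⌈α⌉ = 1 := Int.ceil_eq_iff.mpr ⟨by push_cast; linarith, by push_cast; linarith⟩
      simp [consWord, this]
    | Nat.succ n =>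
      show (if charWord α n then (1:ℤ) else 0) = _
      rw [charWord_if α h0 h1 n]
      have e1 : ⌈((n+1+1:ℕ):ℝ)*α⌉ = ⌊((n:ℝ)+2)*α⌋ + 1 := by
        have hi : Irrational (((n+2:ℕ):ℝ)*α) := hα.natCast_mul (by omega)
        have := ceil_irr _ hi
        rw [show ((n+2:ℕ):ℝ) = (n:ℝ)+2 by push_cast; ring] at this
        rw [show ((n+1+1:ℕ):ℝ) = (n:ℝ)+2 by push_cast; ring, this]
      have e2 : ⌈((n+1:ℕ):ℝ)*α⌉ = ⌊((n:ℝ)+1)*α⌋ + 1 := by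
        have hi : Irrational (((n+1:ℕ):ℝ)*α) := hα.natCast_mul (by omega)
        have := ceil_irr _ hi
        rw [show ((n+1:ℕ):ℝ) = (n:ℝ)+1 by push_cast; ring] at this ⊢
        rw [this]
      rw [e1, e2]
      ring
  · intro i m
    have key : ⌈((i+m:ℕ):ℝ)*α⌉ = ⌈(i:ℝ)*α + (m:ℝ)*α⌉ := by
      congr 1; push_cast; ring
    have hb := ceil_add_bounds ((i:ℝ)*α) ((m:ℝ)*α)
    constructor <;> omega

/-- prefix/factor lists given by `ofFn`. -/
lemma isFactor_ofFn (v : ℕ → Bool) (i len : ℕ) :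
    IsFactor v (List.ofFn (fun j : Fin len => v (i + j))) := by
  refine ⟨i, fun j => ?_⟩
  simp [List.get_ofFn]

lemma count_ofFn (v : ℕ → Bool) (i len : ℕ) :
    (((List.ofFn (fun j : Fin len => v (i + j))).count true : ℤ)) =
      ∑ j ∈ Finset.range len, (if v (i + j) then 1 else 0) := by
  rw [factor_count v _ i (by intro j; simp [List.get_ofFn])]
  simp [List.length_ofFn]

section Forward
variable (w : ℕ → Bool)

def Af (n : ℕ) : ℤ := ∑ j ∈ Finset.range n, (if w j then 1 else 0)

def Bf (n : ℕ) : ℤ := Af w (n - 1)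

lemma Af_succ (n : ℕ) : Af w (n+1) = Af w n + (if w n then 1 else 0) :=
  Finset.sum_range_succ _ n

lemma sum_shift (m : ℕ) : ∀ len : ℕ,
    ∑ j ∈ Finset.range len, (if w (m+j) then (1:ℤ) else 0) = Af w (m+len) - Af w m := by
  intro len
  induction len with
  | zero => simp
  | succ k ih =>
      rw [Finset.sum_range_succ, ih, show m + (k+1) = (m+k)+1 by omega, Af_succ]
      ring

variable {w}

lemma key (hb0 : BalancedWord (consWord false w)) (hb1 : BalancedWord (consWord true w))
    (m n : ℕ) :
    Af w m + Af w n ≤ Af w (m+n+1) ∧ Af w (m+n+1) ≤ Af w m + Af w n + 1 := by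
  have hcons_succ : ∀ (ℓ : Bool) (j : ℕ), consWord ℓ w (j+1) = w j := fun _ _ => rfl
  have hcount0 : ∀ ℓ : Bool,
      (((List.ofFn (fun j : Fin (n+1) => consWord ℓ w (0 + j))).count true : ℤ))
        = Af w n + (if ℓ then 1 else 0) := by
    intro ℓ
    rw [count_ofFn, Finset.sum_range_succ']
    simp only [Nat.zero_add, hcons_succ]
    have h00 : consWord ℓ w 0 = ℓ := rfl
    rw [h00, Af]
  have hcountm : ∀ ℓ : Bool,
      (((List.ofFn (fun j : Fin (n+1) => consWord ℓ w (m + 1 + j))).count true : ℤ))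
        = Af w (m+n+1) - Af w m := by
    intro ℓ
    rw [count_ofFn]
    have : ∀ j ∈ Finset.range (n+1),
        (if consWord ℓ w (m+1+j) then (1:ℤ) else 0) = (if w (m+j) then (1:ℤ) else 0) := by
      intro j _
      rw [show m+1+j = (m+j)+1 by omega, hcons_succ]
    rw [Finset.sum_congr rfl this, sum_shift w m (n+1), show m+(n+1) = m+n+1 by omega]
  have hlen : ∀ (ℓ : Bool) (i : ℕ),
      (List.ofFn (fun j : Fin (n+1) => consWord ℓ w (i + j))).length = n + 1 :=
    fun _ _ => List.length_ofFn
  have h0 := hb0 _ _ (isFactor_ofFn (consWord false w) 0 (n+1))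
    (isFactor_ofFn (consWord false w) (m+1) (n+1)) (by rw [hlen, hlen])
  have h1 := hb1 _ _ (isFactor_ofFn (consWord true w) 0 (n+1))
    (isFactor_ofFn (consWord true w) (m+1) (n+1)) (by rw [hlen, hlen])
  rw [hcount0, hcountm] at h0 h1
  rw [abs_le] at h0 h1
  simp only [if_true, if_false, Bool.false_eq_true] at h0 h1
  omega

lemma Bf_zero : Bf w 0 = 0 := by simp [Bf, Af]

lemma Bsuper (hb0 : BalancedWord (consWord false w)) (hb1 : BalancedWord (consWord true w))
    (m n : ℕ) :
    Bf w m + Bf w n ≤ Bf w (m+n) ∧ Bf w (m+n) ≤ Bf w m + Bf w n + 1 := by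
  match m, n with
  | 0, n => simp [Bf_zero]
  | m, 0 => simp [Bf_zero]
  | m+1, n+1 =>
      have := key hb0 hb1 m n
      have e : Bf w (m+1+(n+1)) = Af w (m+n+1) := by
        show Af w (m+1+(n+1)-1) = _
        congr 1
        omega
      rw [e]
      exact ⟨this.1, this.2⟩


lemma ev_const (e : ℕ → ℤ) (h0 : e 0 = 0) (hmono : Monotone e) (hb : ∀ j, e j ≤ 1) :
    ∃ J, ∀ j, J ≤ j → e (j+1) = e j := by
  by_cases hex : ∃ j, e j = 1
  · obtain ⟨J, hJ⟩ := hex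
    refine ⟨J, fun j hj => ?_⟩
    have h1 := hmono hj
    have h2 := hmono (show J ≤ j+1 from hj.trans (Nat.le_succ j))
    have := hb j; have := hb (j+1)
    omega
  · push_neg at hex
    refine ⟨0, fun j _ => ?_⟩
    have h1 := hmono (Nat.zero_le j)
    have h2 := hmono (Nat.zero_le (j+1))
    have := hb j; have := hb (j+1); have := hex j; have := hex (j+1)
    omega

lemma forward (hap : ¬ EventuallyPeriodic w)
    (hb0 : BalancedWord (consWord false w)) (hb1 : BalancedWord (consWord true w)) :
    ∃ α : ℝ, Irrational α ∧ 0 < α ∧ α < 1 ∧ w = charWord α := by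
  have hsuper := Bsuper hb0 hb1
  have hB1 : Bf w 1 = 0 := by simp [Bf, Af]
  -- multiplicative bounds
  have hmul_low : ∀ k n : ℕ, (k:ℤ) * Bf w n ≤ Bf w (k*n) := by
    intro k n
    induction k with
    | zero => simp [Bf_zero]
    | succ k ih =>
        have h := (hsuper (k*n) n).1
        rw [show (k+1)*n = k*n + n by ring]
        push_cast [add_mul]
        linarith
  have hmul_up : ∀ n k : ℕ, 1 ≤ k → Bf w (k*n) ≤ (k:ℤ) * Bf w n + (k:ℤ) - 1 := by
    intro n k hk
    induction k, hk using Nat.le_induction with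
    | base => simp
    | succ k hk ih =>
        have h := (hsuper (k*n) n).2
        rw [show (k+1)*n = k*n + n by ring] at *
        push_cast [add_mul]
        linarith
  have hcross : ∀ k n : ℕ, 1 ≤ n → (k:ℤ) * Bf w n ≤ (n:ℤ) * Bf w k + (n:ℤ) - 1 := by
    intro k n hn
    have h1 := hmul_low k n
    have h2 := hmul_up k n hn
    rw [show k*n = n*k by ring] at h1
    omega
  -- the slope
  set S : Set ℝ := (fun n : ℕ => (Bf w n : ℝ)/n) '' {n | 1 ≤ n} with hSdef
  have hS0 : (0:ℝ) ∈ S := ⟨1, by norm_num, by simp [hB1]⟩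
  have hSub : ∀ k : ℕ, 1 ≤ k → ∀ x ∈ S, x ≤ ((Bf w k : ℝ) + 1)/k := by
    intro k hk x hx
    obtain ⟨n, hn, rfl⟩ := hx
    have hn' : (1:ℕ) ≤ n := hn
    have hZ : (Bf w n) * (k:ℤ) ≤ ((Bf w k) + 1) * (n:ℤ) - 1 := by
      have h := hcross k n hn'
      have e1 : (k:ℤ) * Bf w n = Bf w n * k := mul_comm _ _
      have e2 : (n:ℤ) * Bf w k + n - 1 = (Bf w k + 1) * n - 1 := by ring
      omega
    have hkpos : (0:ℝ) < k := by exact_mod_cast hk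
    have hnpos : (0:ℝ) < n := by exact_mod_cast hn'
    rw [div_le_div_iff₀ hnpos hkpos]
    calc (Bf w n : ℝ) * k ≤ ((Bf w k : ℝ)+1) * n - 1 := by exact_mod_cast hZ
      _ ≤ _ := by linarith
  have hSne : S.Nonempty := ⟨0, hS0⟩
  have hSbdd : BddAbove S := ⟨(Bf w 1 + 1 : ℝ)/(1:ℕ), fun x hx => hSub 1 le_rfl x hx⟩
  set β : ℝ := sSup S with hβdef
  have hβub : ∀ n : ℕ, 1 ≤ n → (Bf w n : ℝ)/n ≤ β := fun n hn =>
    le_csSup hSbdd ⟨n, hn, rfl⟩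
  have hβle : ∀ k : ℕ, 1 ≤ k → β ≤ ((Bf w k : ℝ) + 1)/k := fun k hk =>
    csSup_le hSne (hSub k hk)
  have hβ0 : 0 ≤ β := le_csSup hSbdd hS0
  have hβ1 : β ≤ 1 := by
    have := hβle 1 le_rfl
    rw [hB1] at this
    simpa using this
  have hBle : ∀ n : ℕ, (Bf w n : ℝ) ≤ n * β := by
    intro n
    match n with
    | 0 => simp [Bf_zero]
    | n+1 =>
        have h := hβub (n+1) (by omega)
        have hpos : (0:ℝ) < (n+1:ℕ) := by exact_mod_cast Nat.succ_pos n
        rw [div_le_iff₀ hpos] at h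
        linarith [h]
  have hleB : ∀ n : ℕ, (n:ℝ) * β ≤ (Bf w n : ℝ) + 1 := by
    intro n
    match n with
    | 0 => simp [Bf_zero]
    | n+1 =>
        have h := hβle (n+1) (by omega)
        have hpos : (0:ℝ) < (n+1:ℕ) := by exact_mod_cast Nat.succ_pos n
        rw [le_div_iff₀ hpos] at h
        linarith [h]
  have hwval : ∀ m : ℕ, (if w m then (1:ℤ) else 0) = Bf w (m+2) - Bf w (m+1) := by
    intro m
    show _ = Af w (m+2-1) - Af w (m+1-1)
    have h1 : m+2-1 = m+1 := by omega
    have h2 : m+1-1 = m := by omega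
    rw [h1, h2, Af_succ]
    ring
  by_cases hirr : Irrational β
  · refine ⟨β, hirr, lt_of_le_of_ne hβ0 (Ne.symm hirr.ne_zero), lt_of_le_of_ne hβ1 hirr.ne_one, ?_⟩
    have hfloor : ∀ n : ℕ, Bf w n = ⌊(n:ℝ) * β⌋ := by
      intro n
      match n with
      | 0 => simp [Bf_zero]
      | n+1 =>
          refine le_antisymm (Int.le_floor.mpr ?_) ?_
          · exact_mod_cast hBle (n+1)
          · have hlt : ((n+1:ℕ):ℝ) * β < (Bf w (n+1) : ℝ) + 1 := by
              refine lt_of_le_of_ne (hleB (n+1)) ?_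
              have : Irrational (((n+1:ℕ):ℝ) * β) := hirr.natCast_mul (Nat.succ_ne_zero n)
              have h2 := this.ne_int (Bf w (n+1) + 1)
              intro hc
              apply h2
              rw [hc]
              push_cast
              ring
            have := Int.floor_lt.mpr (show ((n+1:ℕ):ℝ)*β < ((Bf w (n+1) + 1 : ℤ):ℝ) by push_cast; push_cast at hlt; linarith)
            omega
    funext n
    have e2 : ⌊((n:ℝ)+2)*β⌋ = Bf w (n+2) := by
      rw [hfloor (n+2)]; congr 2; push_cast; ring
    have e1 : ⌊((n:ℝ)+1)*β⌋ = Bf w (n+1) := by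
      rw [hfloor (n+1)]; congr 2; push_cast; ring
    have hw := hwval n
    show w n = charWord β n
    unfold charWord
    rw [e1, e2]
    cases hwn : w n
    · rw [hwn] at hw
      simp only [if_false, Bool.false_eq_true] at hw
      simp [← hw]
    · rw [hwn] at hw
      simp only [if_true] at hw
      simp [← hw]
  · exfalso
    apply hap
    have hrat : β ∈ Set.range ((↑) : ℚ → ℝ) := not_not.mp hirr
    obtain ⟨r, hr⟩ := hrat
    set q : ℕ := r.den with hqdef
    set p : ℤ := r.num with hpdef
    have hq : 1 ≤ q := r.pos
    have hqβ : (q:ℝ) * β = (p:ℝ) := by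
      rw [← hr]
      have hden : (r.den : ℚ) * r = (r.num : ℚ) := by
        have hd := Rat.num_div_den r
        have h0 : (r.den : ℚ) ≠ 0 := by
          have : q ≠ 0 := by omega
          rw [hqdef] at this
          exact_mod_cast this
        rw [div_eq_iff h0] at hd
        rw [mul_comm]
        exact hd.symm
      exact_mod_cast congrArg (fun x : ℚ => (x:ℝ)) hden
    -- integer bounds along arithmetic progressions
    have hprog : ∀ r' j : ℕ, ((r' + j*q : ℕ):ℝ) * β = (r':ℝ)*β + (j:ℤ)*p := by
      intro r' j
      push_cast
      rw [add_mul, mul_assoc, hqβ]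
    have hhigh : ∀ r' j : ℕ, Bf w (r' + j*q) ≤ Bf w r' + (j:ℤ)*p + 1 := by
      intro r' j
      have h1 := hBle (r' + j*q)
      have h2 := hleB r'
      rw [hprog r' j] at h1
      exact_mod_cast (by push_cast at h1 h2 ⊢; linarith : ((Bf w (r' + j*q) : ℤ):ℝ) ≤ ((Bf w r' + (j:ℤ)*p + 1 : ℤ):ℝ))
    have hlow : ∀ r' j : ℕ, Bf w r' + (j:ℤ)*p ≤ Bf w (r' + j*q) + 1 := by
      intro r' j
      have h1 := hleB (r' + j*q)
      have h2 := hBle r'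
      rw [hprog r' j] at h1
      exact_mod_cast (by push_cast at h1 h2 ⊢; linarith : ((Bf w r' + (j:ℤ)*p : ℤ):ℝ) ≤ ((Bf w (r' + j*q) + 1 : ℤ):ℝ))
    have hBq1 : p - 1 ≤ Bf w q := by
      have h2 := hleB q
      rw [hqβ] at h2
      exact_mod_cast (by push_cast; push_cast at h2; linarith :
        ((p - 1 : ℤ):ℝ) ≤ ((Bf w q : ℤ):ℝ))
    have hBq2 : Bf w q ≤ p := by
      have h1 := hBle q
      rw [hqβ] at h1
      exact_mod_cast h1
    have hper : ∀ r' : ℕ, ∃ J, ∀ j, J ≤ j → Bf w (r' + j*q + q) = Bf w (r' + j*q) + p := by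
      intro r'
      have hidx : ∀ j : ℕ, r' + (j+1)*q = r' + j*q + q := fun j => by ring
      rcases (by omega : Bf w q = p ∨ Bf w q = p - 1) with hc | hc
      · set e : ℕ → ℤ := fun j => Bf w (r' + j*q) - Bf w r' - (j:ℤ)*p with he
        have h0 : e 0 = 0 := by simp [he]
        have hmono : Monotone e := by
          apply monotone_nat_of_le_succ
          intro j
          have hs := (hsuper (r' + j*q) q).1
          simp only [he]
          rw [hidx j]
          push_cast
          linarith
        have hbd : ∀ j, e j ≤ 1 := by
          intro j
          have := hhigh r' j
          simp only [he]
          linarith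
        obtain ⟨J, hJ⟩ := ev_const e h0 hmono hbd
        refine ⟨J, fun j hj => ?_⟩
        have heq := hJ j hj
        simp only [he] at heq
        rw [hidx j] at heq
        push_cast at heq
        linarith
      · set e : ℕ → ℤ := fun j => Bf w r' + (j:ℤ)*p - Bf w (r' + j*q) with he
        have h0 : e 0 = 0 := by simp [he]
        have hmono : Monotone e := by
          apply monotone_nat_of_le_succ
          intro j
          have hs := (hsuper (r' + j*q) q).2
          simp only [he]
          rw [hidx j]
          push_cast
          linarith
        have hbd : ∀ j, e j ≤ 1 := by
          intro j
          have := hlow r' j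
          simp only [he]
          linarith
        obtain ⟨J, hJ⟩ := ev_const e h0 hmono hbd
        refine ⟨J, fun j hj => ?_⟩
        have heq := hJ j hj
        simp only [he] at heq
        rw [hidx j] at heq
        push_cast at heq
        linarith
    choose Jf hJf using hper
    set M : ℕ := (Finset.range q).sup Jf + 1 with hM
    have hstep : ∀ n : ℕ, q*M ≤ n → Bf w (n+q) = Bf w n + p := by
      intro n hn
      have hdecomp : n % q + (n / q) * q = n := Nat.mod_add_div' n q
      have hrlt : n % q < q := Nat.mod_lt n (by omega)
      have hjge : Jf (n % q) ≤ n / q := by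
        have h1 : Jf (n % q) ≤ (Finset.range q).sup Jf :=
          Finset.le_sup (Finset.mem_range.mpr hrlt)
        have h2 : M ≤ n / q := by
          rw [Nat.le_div_iff_mul_le (by omega : 0 < q)]
          calc M * q = q * M := by ring
            _ ≤ n := hn
        omega
      have := hJf (n % q) (n / q) hjge
      rw [hdecomp] at this
      exact this
    refine ⟨q*M, q, hq, fun n hn => ?_⟩
    have b1 := hstep (n+1) (by omega)
    have b2 := hstep (n+2) (by omega)
    have hv1 := hwval n
    have hv2 := hwval (n+q)
    rw [show n+q+2 = (n+2)+q by ring, show n+q+1 = (n+1)+q by ring, b1, b2] at hv2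
    cases h1 : w (n+q) <;> cases h2 : w n <;>
      rw [h1] at hv2 <;> rw [h2] at hv1 <;> simp at hv1 hv2 <;> omega
end Forward


theorem balanced_with_cons_iff_characteristic (w : ℕ → Bool)
    (hap : ¬ EventuallyPeriodic w) :
    (BalancedWord w ∧ BalancedWord (consWord false w) ∧ BalancedWord (consWord true w)) ↔
      ∃ α : ℝ, Irrational α ∧ 0 < α ∧ α < 1 ∧ w = charWord α := by
  constructor
  · rintro ⟨_, hb0, hb1⟩
    exact forward hap hb0 hb1
  · rintro ⟨α, hirr, h0, h1, rfl⟩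
    exact ⟨balanced_charWord α h0 h1, balanced_cons_false α h0 h1,
      balanced_cons_true α hirr h0 h1⟩

end StringBricks
end

section
/- Let w : ℕ → {a,b} be an aperiodic right-infinite binary word. Then w is balanced (hence Sturmian) if and only if there is no finite word x over {a,b} such that both a·x·a and b·x·b are factors of w. -/
/-!
STATEMENT 4: An aperiodic right-infinite binary word `w` (alphabet `Bool`,
`a = false`, `b = true`) is balanced (hence Sturmian) if and only if there is
no finite word `x` such that both `a·x·a` and `b·x·b` are factors of `w`.
-/

namespace StringBricks

/-- Number of `true`s in the window of length `n` starting at `i`. -/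
def S (w : ℕ → Bool) (i n : ℕ) : ℤ :=
  ∑ j ∈ Finset.range n, (if w (i + j) then 1 else 0)

lemma S_succ_left (w : ℕ → Bool) (i n : ℕ) :
    S w i (n + 1) = (if w i then 1 else 0) + S w (i + 1) n := by
  have h1 : (∑ j ∈ Finset.range n, if w (i + (j + 1)) then (1 : ℤ) else 0)
      = ∑ j ∈ Finset.range n, if w (i + 1 + j) then (1 : ℤ) else 0 :=
    Finset.sum_congr rfl fun j _ => by rw [show i + (j + 1) = i + 1 + j by omega]
  rw [S, Finset.sum_range_succ', h1, add_comm, Nat.add_zero]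
  rfl

lemma S_succ_right (w : ℕ → Bool) (i n : ℕ) :
    S w i (n + 1) = S w i n + (if w (i + n) then 1 else 0) :=
  Finset.sum_range_succ _ n

lemma S_add (w : ℕ → Bool) (i m n : ℕ) :
    S w i (m + n) = S w i m + S w (i + m) n := by
  induction n with
  | zero => simp [S]
  | succ n ih =>
    rw [show m + (n + 1) = (m + n) + 1 from rfl, S_succ_right, ih, S_succ_right,
      add_assoc, show i + (m + n) = i + m + n by omega]

lemma count_eq_S (w : ℕ → Bool) : ∀ (u : List Bool) (i : ℕ),
    (∀ j : Fin u.length, w (i + j) = u.get j) → (u.count true : ℤ) = S w i u.length := by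
  intro u
  induction u with
  | nil => intro i _; simp [S]
  | cons c t ih =>
    intro i h
    have h0 : w i = c := by simpa using h ⟨0, Nat.succ_pos _⟩
    have ht : ∀ j : Fin t.length, w (i + 1 + j) = t.get j := by
      intro j
      have hh := h ⟨j.1 + 1, Nat.succ_lt_succ j.2⟩
      rw [show i + (j.1 + 1) = i + 1 + j.1 by omega] at hh
      simpa using hh
    have hS := ih (i + 1) ht
    simp only [List.count_cons, List.length_cons]
    rw [S_succ_left, h0, ← hS]
    cases c <;> push_cast <;> simp <;> ring

lemma factor_cxc (w : ℕ → Bool) (c : Bool) (f : ℕ → Bool) (i k : ℕ) (hk : 1 ≤ k)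
    (h0 : w i = c) (hke : w (i + k) = c) (hmid : ∀ j, 1 ≤ j → j < k → w (i + j) = f j) :
    IsFactor w (c :: ((List.ofFn fun j : Fin (k - 1) => f (j.1 + 1)) ++ [c])) := by
  refine ⟨i, fun j => ?_⟩
  obtain ⟨jv, hjv⟩ := j
  have hjk : jv < k + 1 := by
    have h := hjv
    simp only [List.length_cons, List.length_append, List.length_ofFn,
      List.length_singleton, List.length_nil] at h
    omega
  rw [List.get_eq_getElem]
  cases jv with
  | zero => simpa using h0
  | succ m =>
    have hm : m < k := by omega
    rw [List.getElem_cons_succ]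
    by_cases hmlt : m < k - 1
    · rw [List.getElem_append_left (by simpa using hmlt), List.getElem_ofFn]
      exact hmid (m + 1) (by omega) (by omega)
    · have hmeq : m = k - 1 := by omega
      rw [List.getElem_append_right (by simp only [List.length_ofFn]; omega),
        List.getElem_singleton]
      rw [show i + (m + 1) = i + k by omega]
      exact hke

lemma key_s4 (w : ℕ → Bool)
    (hx : ¬ ∃ x : List Bool,
        IsFactor w (false :: (x ++ [false])) ∧ IsFactor w (true :: (x ++ [true]))) :
    ∀ n i i', S w i n - S w i' n ≤ 1 := by
  intro n
  induction n using Nat.strong_induction_on with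
  | _ n IH =>
  intro i i'
  by_contra hcon
  push_neg at hcon
  rcases n with _ | _ | m
  · simp [S] at hcon
  · have h1 : S w i 1 = if w i then 1 else 0 := by
      rw [S, Finset.sum_range_one, Nat.add_zero]
    have h2 : S w i' 1 = if w i' then 1 else 0 := by
      rw [S, Finset.sum_range_one, Nat.add_zero]
    rw [h1, h2] at hcon
    split_ifs at hcon <;> first | omega | simp_all
  · -- n = m + 2
    have htail := IH (m + 1) (by omega) (i + 1) (i' + 1)
    have e1 := S_succ_left w i (m + 1)
    have e1' := S_succ_left w i' (m + 1)
    have hwi : w i = true := by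
      cases hb : w i with
      | true => rfl
      | false =>
        rw [e1, e1', hb] at hcon
        split_ifs at hcon <;> first | omega | simp_all
    have hwi' : w i' = false := by
      cases hb : w i' with
      | false => rfl
      | true =>
        rw [e1, e1', hb] at hcon
        split_ifs at hcon <;> first | omega | simp_all
    have hinit := IH (m + 1) (by omega) i i'
    have e2 := S_succ_right w i (m + 1)
    have e2' := S_succ_right w i' (m + 1)
    have hlast : w (i + (m + 1)) = true := by
      cases hb : w (i + (m + 1)) with
      | true => rfl
      | false =>
        rw [e2, e2', hb] at hcon
        split_ifs at hcon <;> first | omega | simp_all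
    have hlast' : w (i' + (m + 1)) = false := by
      cases hb : w (i' + (m + 1)) with
      | false => rfl
      | true =>
        rw [e2, e2', hb] at hcon
        split_ifs at hcon <;> first | omega | simp_all
    have hex : ∃ j, 1 ≤ j ∧ w (i + j) ≠ w (i' + j) :=
      ⟨m + 1, by omega, by rw [hlast, hlast']; simp⟩
    obtain ⟨k, ⟨hk1, hkne⟩, hmin⟩ : ∃ k, (1 ≤ k ∧ w (i + k) ≠ w (i' + k)) ∧
        ∀ j, j < k → ¬(1 ≤ j ∧ w (i + j) ≠ w (i' + j)) :=
      ⟨Nat.find hex, Nat.find_spec hex, fun j hj => Nat.find_min hex hj⟩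
    have hkle : k ≤ m + 1 := by
      by_contra hgt
      exact hmin (m + 1) (by omega) ⟨by omega, by rw [hlast, hlast']; simp⟩
    have hmid : ∀ j, 1 ≤ j → j < k → w (i + j) = w (i' + j) := by
      intro j h1 hjk
      have hnm := hmin j hjk
      push_neg at hnm
      exact hnm h1
    have hconN : 1 < S w i (m + 2) - S w i' (m + 2) := hcon
    cases hik : w (i + k) with
    | true =>
      have hik' : w (i' + k) = false := by
        cases h : w (i' + k) with
        | false => rfl
        | true => exact absurd (hik.trans h.symm) hkne
      exact hx ⟨List.ofFn fun j : Fin (k - 1) => w (i + (j.1 + 1)),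
        factor_cxc w false (fun j => w (i + j)) i' k hk1 hwi' hik'
          (fun j ha hb => (hmid j ha hb).symm),
        factor_cxc w true (fun j => w (i + j)) i k hk1 hwi hik (fun _ _ _ => rfl)⟩
    | false =>
      have hik' : w (i' + k) = true := by
        cases h : w (i' + k) with
        | true => rfl
        | false => exact absurd (hik.trans h.symm) hkne
      have hklt : k < m + 1 := by
        rcases Nat.lt_or_ge k (m + 1) with h | h
        · exact h
        · exfalso
          have hkeq : k = m + 1 := by omega
          rw [hkeq, hlast] at hik
          simp at hik
      have hmideq : S w (i + 1) (k - 1) = S w (i' + 1) (k - 1) := by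
        unfold S
        refine Finset.sum_congr rfl fun j hj => ?_
        rw [Finset.mem_range] at hj
        rw [show i + 1 + j = i + (j + 1) by omega, show i' + 1 + j = i' + (j + 1) by omega,
          hmid (j + 1) (by omega) (by omega)]
      have a1 := S_succ_left w i k
      have a1' := S_succ_left w i' k
      have a2 : S w (i + 1) k = S w (i + 1) (k - 1) + (if w (i + k) then 1 else 0) := by
        have h := S_succ_right w (i + 1) (k - 1)
        rw [show k - 1 + 1 = k by omega, show i + 1 + (k - 1) = i + k by omega] at h
        exact h
      have a2' : S w (i' + 1) k = S w (i' + 1) (k - 1) + (if w (i' + k) then 1 else 0) := by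
        have h := S_succ_right w (i' + 1) (k - 1)
        rw [show k - 1 + 1 = k by omega, show i' + 1 + (k - 1) = i' + k by omega] at h
        exact h
      have hpre : S w i (k + 1) = S w i' (k + 1) := by
        rw [a1, a1', a2, a2', hmideq, hwi, hwi', hik, hik']
        ring
      have hsplit : S w i (m + 2) = S w i (k + 1) + S w (i + (k + 1)) (m + 2 - (k + 1)) := by
        have h := S_add w i (k + 1) (m + 2 - (k + 1))
        rw [show (k + 1) + (m + 2 - (k + 1)) = m + 2 by omega] at h
        exact h
      have hsplit' : S w i' (m + 2) = S w i' (k + 1) + S w (i' + (k + 1)) (m + 2 - (k + 1)) := by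
        have h := S_add w i' (k + 1) (m + 2 - (k + 1))
        rw [show (k + 1) + (m + 2 - (k + 1)) = m + 2 by omega] at h
        exact h
      have htail2 := IH (m + 2 - (k + 1)) (by omega) (i + (k + 1)) (i' + (k + 1))
      omega

lemma balanced_of_key (w : ℕ → Bool) (h : ∀ n i i', S w i n - S w i' n ≤ 1) :
    BalancedWord w := by
  rintro u v ⟨i, hi⟩ ⟨j, hj⟩ hlen
  rw [count_eq_S w u i hi, count_eq_S w v j hj, hlen]
  have h1 := h v.length i j
  have h2 := h v.length j i
  rw [abs_le]
  omega

theorem balanced_iff_no_axa_bxb (w : ℕ → Bool) (hap : ¬ EventuallyPeriodic w) :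
    BalancedWord w ↔
      ¬ ∃ x : List Bool,
        IsFactor w (false :: (x ++ [false])) ∧ IsFactor w (true :: (x ++ [true])) := by
  constructor
  · rintro hbal ⟨x, hfa, hfb⟩
    have hlen : (false :: (x ++ [false])).length = (true :: (x ++ [true])).length := by simp
    have hb := hbal _ _ hfa hfb hlen
    have hc1 : ((false :: (x ++ [false])).count true : ℤ) = x.count true := by
      simp [List.count_cons, List.count_append]
    have hc2 : ((true :: (x ++ [true])).count true : ℤ) = x.count true + 2 := by
      simp [List.count_cons, List.count_append]
      push_cast
      ring
    rw [hc1, hc2, abs_le] at hb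
    omega
  · intro hx
    exact balanced_of_key w (key_s4 w hx)

end StringBricks
end

section
/- Let α ∈ (0,1) be irrational and let w : ℕ → {a,b} be a right-infinite Sturmian word whose frequency of the letter b equals α, i.e., (1/n)·#{i < n : w(i) = b} → α as n → ∞. Let c_α be the characteristic word of slope α. Then for every finite word s over {a,b}: both s·a and s·b (the words obtained from s by appending the letter a, respectively b, at the end) are factors of w if and only if the reversal of s is a prefix of c_α. -/
/-!
STATEMENT 7: Let `α ∈ (0,1)` be irrational and `w` a right-infinite Sturmian
word (`a = false`, `b = true`) whose frequency of the letter `b` is `α`. Then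
for every finite word `s`: both `s·a` and `s·b` are factors of `w` iff the
reversal of `s` is a prefix of the characteristic word `c_α`.
-/

namespace StringBricks

def SturmianWord (w : ℕ → Bool) : Prop :=
  BalancedWord w ∧ ¬ EventuallyPeriodic w

/-- `u` is a prefix of the right-infinite word `w`. -/
def IsPrefixOf (u : List Bool) (w : ℕ → Bool) : Prop :=
  ∀ j : Fin u.length, w j = u.get j

namespace SBAux
open Filter
def cnt (w : ℕ → Bool) (n : ℕ) : ℕ := ((Finset.range n).filter fun i => w i = true).card
lemma cnt_succ (w : ℕ → Bool) (n : ℕ) :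
    cnt w (n + 1) = cnt w n + (if w n = true then 1 else 0) := by
  unfold cnt
  rw [Finset.range_add_one, Finset.filter_insert]
  split
  · rw [Finset.card_insert_of_notMem (by simp)]
  · simp
def word (w : ℕ → Bool) (i n : ℕ) : List Bool := (List.range n).map fun k => w (i + k)
lemma word_length (w : ℕ → Bool) (i n : ℕ) : (word w i n).length = n := by simp [word]
lemma word_get (w : ℕ → Bool) (i n : ℕ) (j : ℕ) (hj : j < (word w i n).length) :
    (word w i n).get ⟨j, hj⟩ = w (i + j) := by
  simp [word]
lemma isFactor_word (w : ℕ → Bool) (i n : ℕ) : IsFactor w (word w i n) :=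
  ⟨i, fun j => (word_get w i n j j.isLt).symm⟩
lemma count_word (w : ℕ → Bool) (i n : ℕ) :
    ((word w i n).count true : ℤ) = (cnt w (i + n) : ℤ) - cnt w i := by
  induction n with
  | zero => simp [word]
  | succ n ih =>
    have : word w i (n + 1) = word w i n ++ [w (i + n)] := by
      simp [word, List.range_succ]
    rw [this, List.count_append, show i + (n+1) = (i+n)+1 by ring, cnt_succ w (i + n)]
    push_cast
    rw [show ((List.count true (word w i n) : ℤ)) = (cnt w (i + n) : ℤ) - cnt w i from ih]
    cases h : w (i + n) <;> simp [h] <;> ring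

section Main
variable {α : ℝ} {w : ℕ → Bool}

lemma int_ne (hirr : Irrational α) {k : ℤ} (hk : k ≠ 0) (z : ℤ) : (k : ℝ) * α ≠ z :=
  fun h => (hirr.intCast_mul hk).ne_int z h

lemma window_balance (hbal : BalancedWord w) (i j n : ℕ) :
    |((cnt w (i + n) : ℤ) - cnt w i) - ((cnt w (j + n) : ℤ) - cnt w j)| ≤ 1 := by
  have h := hbal (word w i n) (word w j n) (isFactor_word w i n) (isFactor_word w j n)
    (by simp [word_length])
  rwa [count_word, count_word] at h

lemma window_freq (hbal : BalancedWord w)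
    (hfreq : Tendsto (fun n : ℕ => ((cnt w n : ℝ)) / n) atTop (nhds α))
    (j n : ℕ) : |(((cnt w (j + n) : ℤ) - cnt w j : ℤ) : ℝ) - n * α| ≤ 1 := by
  rcases Nat.eq_zero_or_pos n with rfl | hn
  · simp
  set h : ℤ := (cnt w (j + n) : ℤ) - cnt w j with hh
  have tele : ∀ t : ℕ, (t : ℤ) * (h - 1) ≤ (cnt w (t * n) : ℤ) ∧
      (cnt w (t * n) : ℤ) ≤ t * (h + 1) := by
    intro t
    induction t with
    | zero => simp [cnt]
    | succ t ih =>
      have hb := window_balance hbal (t * n) j n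
      rw [abs_le] at hb
      have he : (t + 1) * n = t * n + n := by ring
      rw [he]
      push_cast
      constructor <;> nlinarith [ih.1, ih.2, hb.1, hb.2]
  have hmul : Tendsto (fun t : ℕ => t * n) atTop atTop :=
    tendsto_atTop_mono (fun t => Nat.le_mul_of_pos_right t hn) tendsto_id
  have A : Tendsto (fun t : ℕ => (cnt w (t * n) : ℝ) / (t * n : ℕ)) atTop (nhds α) :=
    hfreq.comp hmul
  have B : Tendsto (fun t : ℕ => (cnt w (t * n) : ℝ) / (t * n : ℕ) * n) atTop
      (nhds (α * n)) := A.mul_const _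
  have C : Tendsto (fun t : ℕ => (cnt w (t * n) : ℝ) / t) atTop (nhds (α * n)) := by
    refine B.congr' ?_
    filter_upwards [eventually_ge_atTop 1] with t ht
    have ht0 : (t : ℝ) ≠ 0 := by positivity
    have hn0 : (n : ℝ) ≠ 0 := by positivity
    push_cast
    field_simp
  have hub : α * n ≤ (h : ℝ) + 1 := by
    refine le_of_tendsto C ?_
    filter_upwards [eventually_ge_atTop 1] with t ht
    have ht0 : (0 : ℝ) < t := by positivity
    have := (tele t).2
    rw [div_le_iff₀ ht0]
    calc (cnt w (t * n) : ℝ) ≤ (t : ℝ) * ((h : ℝ) + 1) := by exact_mod_cast this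
      _ = ((h : ℝ) + 1) * t := by ring
  have hlb : (h : ℝ) - 1 ≤ α * n := by
    refine ge_of_tendsto C ?_
    filter_upwards [eventually_ge_atTop 1] with t ht
    have ht0 : (0 : ℝ) < t := by positivity
    have := (tele t).1
    rw [le_div_iff₀ ht0]
    calc ((h : ℝ) - 1) * t = (t : ℝ) * ((h : ℝ) - 1) := by ring
      _ ≤ (cnt w (t * n) : ℝ) := by exact_mod_cast this
  rw [abs_le]
  constructor <;> nlinarith

def gg (w : ℕ → Bool) (α : ℝ) (m : ℕ) : ℝ := (cnt w m : ℝ) - m * α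

lemma gg_sub (w : ℕ → Bool) (α : ℝ) (m' n : ℕ) :
    gg w α (m' + n) - gg w α m' = (((cnt w (m' + n) : ℤ) - cnt w m' : ℤ) : ℝ) - n * α := by
  unfold gg; push_cast; ring

lemma gg_abs (hbal : BalancedWord w)
    (hfreq : Tendsto (fun n : ℕ => ((cnt w n : ℝ)) / n) atTop (nhds α))
    (m m' : ℕ) : |gg w α m - gg w α m'| ≤ 1 := by
  rcases le_total m' m with hle | hle
  · obtain ⟨n, rfl⟩ := Nat.exists_eq_add_of_le hle
    rw [gg_sub]
    exact window_freq hbal hfreq m' n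
  · obtain ⟨n, rfl⟩ := Nat.exists_eq_add_of_le hle
    rw [abs_sub_comm, gg_sub]
    exact window_freq hbal hfreq m n

lemma gg_lt (hirr : Irrational α) (hbal : BalancedWord w)
    (hfreq : Tendsto (fun n : ℕ => ((cnt w n : ℝ)) / n) atTop (nhds α))
    (m m' : ℕ) : gg w α m - gg w α m' < 1 := by
  rcases eq_or_ne m m' with rfl | hne
  · simp
  refine lt_of_le_of_ne (le_trans (le_abs_self _) (gg_abs hbal hfreq m m')) ?_
  intro heq
  have hk : ((m : ℤ) - m' : ℤ) ≠ 0 := by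
    refine sub_ne_zero.2 ?_
    exact_mod_cast hne
  apply int_ne hirr hk ((cnt w m : ℤ) - cnt w m' - 1)
  unfold gg at heq
  push_cast
  push_cast at heq
  linarith


noncomputable def Fl (α : ℝ) (k : ℕ) (x : ℝ) : ℤ := ⌊(k : ℝ) * α + x⌋

lemma mech_of_factor (hirr : Irrational α) (hbal : BalancedWord w)
    (hfreq : Tendsto (fun n : ℕ => ((cnt w n : ℝ)) / n) atTop (nhds α))
    (u : List Bool) (hu : IsFactor w u) :
    ∃ x : ℝ, 0 ≤ x ∧ x < 1 ∧ ∀ j : Fin u.length,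
      (u.get j = true ↔ Fl α ((j : ℕ) + 1) x - Fl α (j : ℕ) x = 1) := by
  obtain ⟨i, hi⟩ := hu
  set L := u.length with hL
  set d : ℕ → ℝ := fun k => gg w α (i + k) - gg w α i with hd
  obtain ⟨K, hKmem, hKmax⟩ := Finset.exists_max_image (Finset.range (L + 1)) d ⟨0, by simp⟩
  have hd0 : d 0 = 0 := by simp [hd]
  have hdiff : ∀ k k' : ℕ, d k - d k' < 1 := by
    intro k k'
    have h := gg_lt hirr hbal hfreq (i + k) (i + k')
    simp only [hd]
    linarith
  have hx0 : 0 ≤ d K := by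
    have := hKmax 0 (by simp)
    rwa [hd0] at this
  have hx1 : d K < 1 := by
    have := hdiff K 0
    rwa [hd0, sub_zero] at this
  have hdk : ∀ k : ℕ, d k = (((cnt w (i + k) : ℤ) - cnt w i : ℤ) : ℝ) - k * α := by
    intro k
    simp only [hd]
    exact gg_sub w α i k
  have hfloor : ∀ k, k ≤ L → Fl α k (d K) = (cnt w (i + k) : ℤ) - cnt w i := by
    intro k hk
    have h1 : d k ≤ d K := hKmax k (by simp; omega)
    have h2 : d K - d k < 1 := hdiff K k
    have hq := hdk k
    push_cast at hq
    rw [Fl, Int.floor_eq_iff]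
    constructor
    · push_cast
      linarith
    · push_cast
      linarith
  refine ⟨d K, hx0, hx1, fun j => ?_⟩
  have hj : (j : ℕ) < L := j.isLt
  have e1 := hfloor (j : ℕ) (le_of_lt hj)
  have e2 := hfloor ((j : ℕ) + 1) (by omega)
  have hw' : w (i + (j : ℕ)) = u.get j := hi j
  have hcnt := cnt_succ w (i + (j : ℕ))
  have hadd : i + ((j : ℕ) + 1) = (i + (j : ℕ)) + 1 := rfl
  rw [hadd] at e2
  cases h : u.get j
  · rw [h] at hw'
    rw [hw'] at hcnt
    simp at hcnt
    constructor
    · intro hc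
      exact absurd hc (by simp)
    · intro hc
      exfalso
      rw [e1, e2, hcnt] at hc
      omega
  · rw [h] at hw'
    rw [hw'] at hcnt
    simp at hcnt
    simp only [true_iff]
    rw [e1, e2, hcnt]
    push_cast
    ring

noncomputable def cLow (w : ℕ → Bool) (α : ℝ) : ℝ := ⨅ m : ℕ, gg w α m

lemma cLow_le (hbal : BalancedWord w)
    (hfreq : Tendsto (fun n : ℕ => ((cnt w n : ℝ)) / n) atTop (nhds α))
    (m : ℕ) : cLow w α ≤ gg w α m := by
  refine ciInf_le ⟨gg w α 0 - 1, ?_⟩ m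
  rintro y ⟨m', rfl⟩
  have := gg_abs hbal hfreq 0 m'
  rw [abs_le] at this
  linarith [this.1]

lemma le_cLow (hirr : Irrational α) (hbal : BalancedWord w)
    (hfreq : Tendsto (fun n : ℕ => ((cnt w n : ℝ)) / n) atTop (nhds α))
    (m : ℕ) : gg w α m ≤ cLow w α + 1 := by
  have h : gg w α m - 1 ≤ cLow w α :=
    le_ciInf fun m' => by have := gg_lt hirr hbal hfreq m m'; linarith
  linarith

lemma cnt_eq (hirr : Irrational α) (hbal : BalancedWord w)
    (hfreq : Tendsto (fun n : ℕ => ((cnt w n : ℝ)) / n) atTop (nhds α))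
    (m : ℕ) (hm : Int.fract ((m : ℝ) * α + cLow w α) ≠ 0) :
    (cnt w m : ℤ) = Fl α m (cLow w α) + 1 := by
  set t := (m : ℝ) * α + cLow w α with ht
  have hpos : 0 < Int.fract t := lt_of_le_of_ne (Int.fract_nonneg t) (Ne.symm hm)
  have hne : t ≠ (⌊t⌋ : ℝ) := Int.fract_pos.1 hpos
  have h1 : (⌊t⌋ : ℝ) < t := lt_of_le_of_ne (Int.floor_le t) (Ne.symm hne)
  have h2 : t ≤ (cnt w m : ℝ) := by
    have := cLow_le hbal hfreq m
    unfold gg at this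
    rw [ht]
    linarith
  have h3 : (cnt w m : ℝ) ≤ t + 1 := by
    have := le_cLow hirr hbal hfreq m
    unfold gg at this
    rw [ht]
    linarith
  have i1 : ⌊t⌋ < (cnt w m : ℤ) := by exact_mod_cast lt_of_lt_of_le h1 h2
  have i2 : (cnt w m : ℤ) < ⌊t⌋ + 2 := by
    have hr : (cnt w m : ℝ) < (⌊t⌋ : ℝ) + 2 := by
      have := Int.lt_floor_add_one t
      linarith
    exact_mod_cast hr
  rw [Fl, ← ht]
  omega

lemma exc (hirr : Irrational α) :
    ∃ N₀ : ℕ, ∀ m, N₀ ≤ m → Int.fract ((m : ℝ) * α + cLow w α) ≠ 0 := by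
  by_contra hcon
  push_neg at hcon
  obtain ⟨m₁, hm₁, hf₁⟩ := hcon 0
  obtain ⟨m₂, hm₂, hf₂⟩ := hcon (m₁ + 1)
  have e₁ : (m₁ : ℝ) * α + cLow w α = (⌊(m₁ : ℝ) * α + cLow w α⌋ : ℝ) := by
    have := Int.floor_add_fract ((m₁ : ℝ) * α + cLow w α)
    rw [hf₁, add_zero] at this
    linarith
  have e₂ : (m₂ : ℝ) * α + cLow w α = (⌊(m₂ : ℝ) * α + cLow w α⌋ : ℝ) := by
    have := Int.floor_add_fract ((m₂ : ℝ) * α + cLow w α)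
    rw [hf₂, add_zero] at this
    linarith
  refine int_ne hirr (k := (m₂ : ℤ) - m₁) (by omega)
    (⌊(m₂ : ℝ) * α + cLow w α⌋ - ⌊(m₁ : ℝ) * α + cLow w α⌋) ?_
  push_cast
  linarith

lemma struct (hirr : Irrational α) (hbal : BalancedWord w)
    (hfreq : Tendsto (fun n : ℕ => ((cnt w n : ℝ)) / n) atTop (nhds α))
    (N₀ : ℕ) (hN₀ : ∀ m, N₀ ≤ m → Int.fract ((m : ℝ) * α + cLow w α) ≠ 0)
    (m : ℕ) (hm : N₀ ≤ m) :
    (w m = true ↔ Fl α (m + 1) (cLow w α) - Fl α m (cLow w α) = 1) := by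
  have c1 := cnt_eq hirr hbal hfreq m (hN₀ m hm)
  have c2 := cnt_eq hirr hbal hfreq (m + 1) (hN₀ (m + 1) (by omega))
  have hs := cnt_succ w m
  cases h : w m
  · rw [h] at hs
    simp at hs
    rw [hs] at c2
    simp only [Bool.false_eq_true, false_iff]
    omega
  · rw [h] at hs
    simp at hs
    rw [hs] at c2
    simp only [true_iff]
    push_cast at c2
    omega

lemma floor_shift (a b : ℝ) : ⌊a + b⌋ = ⌊a + Int.fract b⌋ + ⌊b⌋ := by
  conv_lhs => rw [← Int.floor_add_fract b]
  rw [show a + ((⌊b⌋ : ℝ) + Int.fract b) = (a + Int.fract b) + (⌊b⌋ : ℝ) by ring,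
    Int.floor_add_intCast]

lemma floor_M_sub (M : ℤ) (t : ℝ) (ht : ∀ z : ℤ, t ≠ z) : ⌊(M : ℝ) - t⌋ = M - ⌊t⌋ - 1 := by
  rw [Int.floor_eq_iff]
  have h1 := Int.lt_floor_add_one t
  have h2 : (⌊t⌋ : ℝ) < t := lt_of_le_of_ne (Int.floor_le t) (Ne.symm (ht ⌊t⌋))
  constructor
  · push_cast
    linarith
  · push_cast
    linarith

lemma small_fract (hirr : Irrational α) (δ : ℝ) (hδ : 0 < δ) :
    ∃ q : ℕ, 1 ≤ q ∧ Int.fract ((q : ℝ) * α) < δ := by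
  set δ₁ := min δ (1/2) with hδ₁def
  have hδ₁ : 0 < δ₁ := lt_min hδ (by norm_num)
  have hδ₁δ : δ₁ ≤ δ := min_le_left _ _
  have hδ₁h : δ₁ ≤ 1/2 := min_le_right _ _
  obtain ⟨n, hn⟩ := exists_nat_gt (1/δ₁)
  have hn0 : 0 < n := by
    by_contra h
    push_neg at h
    interval_cases n
    simp at hn
    have : 0 < 1/δ₁ := by positivity
    linarith
  obtain ⟨j, k, hk0, hkn, hjk⟩ := Real.exists_int_int_abs_mul_sub_le α hn0
  have hsmall : |(k : ℝ) * α - j| < δ₁ := by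
    refine lt_of_le_of_lt hjk ?_
    rw [div_lt_iff₀ (by positivity)]
    have h1 : (1:ℝ)/δ₁ < n := hn
    have h2 : 0 < δ₁ := hδ₁
    rw [div_lt_iff₀ h2] at h1
    nlinarith
  set q₀ : ℕ := k.toNat with hq₀def
  have hq₀ : 1 ≤ q₀ := by omega
  have hq₀cast : ((q₀ : ℕ) : ℝ) = (k : ℝ) := by
    have : ((q₀ : ℕ) : ℤ) = k := Int.toNat_of_nonneg hk0.le
    exact_mod_cast this
  rw [abs_lt] at hsmall
  rw [← hq₀cast] at hsmall
  have hne : (q₀ : ℝ) * α - j ≠ 0 := by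
    intro h
    exact int_ne hirr (k := (q₀ : ℤ)) (by omega) j (by push_cast; linarith)
  rcases lt_or_gt_of_ne hne with hneg | hpos
  · -- fract(q₀ α) close to 1
    have hf : Int.fract ((q₀ : ℝ) * α) = (q₀ : ℝ) * α - j + 1 := by
      rw [Int.fract_eq_iff]
      refine ⟨by linarith, by linarith, ⟨j - 1, by push_cast; ring⟩⟩
    set ε := (j : ℝ) - (q₀ : ℝ) * α with hεdef
    have hε0 : 0 < ε := by simp only [hεdef]; linarith
    have hε1 : ε < δ₁ := by simp only [hεdef]; linarith
    set k₀ : ℕ := ⌊(1 - δ₁)/ε⌋₊ + 1 with hk₀def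
    have hfl1 : ((1:ℝ) - δ₁)/ε < k₀ := by
      have := Nat.lt_floor_add_one ((1 - δ₁)/ε)
      rw [hk₀def]
      push_cast
      linarith
    have hk₀1 : 1 - δ₁ < k₀ * ε := by
      rw [div_lt_iff₀ hε0] at hfl1
      linarith
    have hk₀2 : (k₀ : ℝ) * ε ≤ 1 - δ₁ + ε := by
      have hnn : (0:ℝ) ≤ (1 - δ₁)/ε := by
        apply div_nonneg _ hε0.le
        linarith
      have := Nat.floor_le hnn
      have hcast : (k₀ : ℝ) = (⌊(1 - δ₁)/ε⌋₊ : ℝ) + 1 := by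
        rw [hk₀def]; push_cast; ring
      rw [hcast]
      have h2 : ((⌊(1 - δ₁)/ε⌋₊ : ℝ)) * ε ≤ ((1 - δ₁)/ε) * ε := by
        apply mul_le_mul_of_nonneg_right this hε0.le
      rw [div_mul_cancel₀] at h2
      · linarith
      · exact hε0.ne'
    refine ⟨k₀ * q₀, Nat.one_le_iff_ne_zero.2 (by positivity), ?_⟩
    have hfv : Int.fract (((k₀ * q₀ : ℕ) : ℝ) * α) = 1 - k₀ * ε := by
      rw [Int.fract_eq_iff]
      refine ⟨by linarith, by linarith, ⟨(k₀ : ℤ) * j - 1, ?_⟩⟩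
      push_cast
      simp only [hεdef]
      ring
    rw [hfv]
    linarith
  · have hf : Int.fract ((q₀ : ℝ) * α) = (q₀ : ℝ) * α - j := by
      rw [Int.fract_eq_iff]
      refine ⟨by linarith, by linarith, ⟨j, by push_cast; ring⟩⟩
    refine ⟨q₀, hq₀, ?_⟩
    rw [hf]
    linarith

lemma hit (hirr : Irrational α)
    (N₀ : ℕ) (hfracN₀ : Int.fract ((N₀ : ℝ) * α + cLow w α) ≠ 0)
    (u v : ℝ) (hu : 0 ≤ u) (huv : u < v) (hv : v ≤ 1) :
    ∃ i : ℕ, N₀ ≤ i ∧ u < Int.fract ((i : ℝ) * α + cLow w α) ∧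
      Int.fract ((i : ℝ) * α + cLow w α) < v := by
  obtain ⟨q, hq1, hqs⟩ := small_fract hirr (v - u) (by linarith)
  set s := Int.fract ((q : ℝ) * α) with hsdef
  have hs0 : 0 < s := by
    refine lt_of_le_of_ne (Int.fract_nonneg _) (Ne.symm ?_)
    intro h
    have : (q : ℝ) * α = (⌊(q : ℝ) * α⌋ : ℝ) := by
      have h3 := Int.floor_add_fract ((q : ℝ) * α)
      rw [← hsdef] at h3
      linarith
    exact int_ne hirr (k := (q : ℤ)) (by omega) ⌊(q : ℝ) * α⌋ (by push_cast; linarith)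
  set θ := (N₀ : ℝ) * α + cLow w α with hθdef
  set K := ⌈θ⌉ with hKdef
  have hθK : θ < (K : ℝ) := by
    refine lt_of_le_of_ne (Int.le_ceil θ) ?_
    intro h
    apply hfracN₀
    rw [show θ = ((K : ℤ) : ℝ) from h]
    exact Int.fract_intCast K
  have hP : ∃ t : ℕ, u + K < θ + t * s := by
    obtain ⟨t, ht⟩ := exists_nat_gt ((u + K - θ)/s)
    refine ⟨t, ?_⟩
    rw [div_lt_iff₀ hs0] at ht
    linarith
  classical
  have hT := Nat.find_spec hP
  have hT0 : Nat.find hP ≠ 0 := by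
    intro h
    rw [h] at hT
    simp at hT
    linarith
  obtain ⟨T', hT'⟩ : ∃ T', Nat.find hP = T' + 1 := ⟨Nat.find hP - 1, by omega⟩
  have hprev : ¬ (u + K < θ + T' * s) := Nat.find_min hP (by omega)
  push_neg at hprev
  rw [hT'] at hT
  push_cast at hT
  have hub : θ + (T' + 1 : ℝ) * s < v + K := by
    have : s < v - u := hqs
    nlinarith [hprev]
  set val := θ + ((T' : ℝ) + 1) * s with hvaldef
  have hfloor : ⌊val⌋ = K := by
    rw [Int.floor_eq_iff]
    constructor
    · linarith
    · push_cast
      linarith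
  have hfr : Int.fract val = val - K := by
    have := Int.floor_add_fract val
    rw [hfloor] at this
    linarith
  refine ⟨N₀ + (T' + 1) * q, by omega, ?_, ?_⟩
  · have heq : Int.fract ((↑(N₀ + (T' + 1) * q) : ℝ) * α + cLow w α) = Int.fract val := by
      rw [Int.fract_eq_fract]
      refine ⟨((T' : ℤ) + 1) * ⌊(q : ℝ) * α⌋, ?_⟩
      have hfs : ((⌊(q : ℝ) * α⌋ : ℤ) : ℝ) = (q : ℝ) * α - s := by
        have := Int.floor_add_fract ((q : ℝ) * α)
        rw [← hsdef] at this
        linarith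
      rw [hvaldef, hθdef]
      push_cast
      rw [hfs]
      ring
    rw [heq, hfr]
    linarith
  · have heq : Int.fract ((↑(N₀ + (T' + 1) * q) : ℝ) * α + cLow w α) = Int.fract val := by
      rw [Int.fract_eq_fract]
      refine ⟨((T' : ℤ) + 1) * ⌊(q : ℝ) * α⌋, ?_⟩
      have hfs : ((⌊(q : ℝ) * α⌋ : ℤ) : ℝ) = (q : ℝ) * α - s := by
        have := Int.floor_add_fract ((q : ℝ) * α)
        rw [← hsdef] at this
        linarith
      rw [hvaldef, hθdef]
      push_cast
      rw [hfs]
      ring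
    rw [heq, hfr]
    linarith

lemma factor_of_mech (hirr : Irrational α) (hbal : BalancedWord w)
    (hfreq : Tendsto (fun n : ℕ => ((cnt w n : ℝ)) / n) atTop (nhds α))
    (N₀ : ℕ) (hN₀ : ∀ m, N₀ ≤ m → Int.fract ((m : ℝ) * α + cLow w α) ≠ 0)
    (u : List Bool) (x : ℝ) (hx0 : 0 ≤ x) (hx1 : x < 1)
    (hmech : ∀ j : Fin u.length, (u.get j = true ↔ Fl α ((j : ℕ) + 1) x - Fl α (j : ℕ) x = 1)) :
    IsFactor w u := by
  set L := u.length with hLdef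
  have hne : (Finset.range (L + 1)).Nonempty := ⟨0, by simp⟩
  set γ := (Finset.range (L + 1)).inf' hne
    (fun k => ((⌊(k : ℝ) * α + x⌋ : ℤ) : ℝ) + 1 - k * α) with hγdef
  have hγx : x < γ := by
    rw [hγdef, Finset.lt_inf'_iff]
    intro k _
    have := Int.lt_floor_add_one ((k : ℝ) * α + x)
    linarith
  have hγ1 : γ ≤ 1 := by
    have h0 := Finset.inf'_le (f := fun k : ℕ => ((⌊(k : ℝ) * α + x⌋ : ℤ) : ℝ) + 1 - k * α)
      (show (0 : ℕ) ∈ Finset.range (L + 1) by simp)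
    simp only [Nat.cast_zero, zero_mul, zero_add] at h0
    rw [show ⌊x⌋ = 0 from Int.floor_eq_zero_iff.2 ⟨hx0, hx1⟩] at h0
    rw [hγdef]
    simpa only [Int.cast_zero, zero_add, sub_zero] using h0
  obtain ⟨i, hiN, hlo, hhi⟩ := hit hirr N₀ (hN₀ N₀ le_rfl) x γ hx0 hγx hγ1
  set β := Int.fract ((i : ℝ) * α + cLow w α) with hβdef
  have hfl : ∀ k, k ≤ L → ⌊(k : ℝ) * α + β⌋ = ⌊(k : ℝ) * α + x⌋ := by
    intro k hk
    have h2 : β < ((⌊(k : ℝ) * α + x⌋ : ℤ) : ℝ) + 1 - k * α := by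
      refine lt_of_lt_of_le hhi ?_
      rw [hγdef]
      exact Finset.inf'_le _ (by simp; omega)
    have hlt : ⌊(k : ℝ) * α + β⌋ < ⌊(k : ℝ) * α + x⌋ + 1 := by
      rw [Int.floor_lt]
      push_cast
      linarith
    have hge : ⌊(k : ℝ) * α + x⌋ ≤ ⌊(k : ℝ) * α + β⌋ := Int.floor_mono (by linarith)
    omega
  have hshift : ∀ k : ℕ, Fl α (i + k) (cLow w α) = ⌊(k : ℝ) * α + β⌋ + ⌊(i : ℝ) * α + cLow w α⌋ := by
    intro k
    have hfs := floor_shift ((k : ℝ) * α) ((i : ℝ) * α + cLow w α)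
    rw [Fl, show ((i + k : ℕ) : ℝ) * α + cLow w α
      = (k : ℝ) * α + ((i : ℝ) * α + cLow w α) by push_cast; ring]
    rw [hfs, ← hβdef]
  refine ⟨i, fun j => ?_⟩
  have hj : (j : ℕ) < L := j.isLt
  have hst := struct hirr hbal hfreq N₀ hN₀ (i + (j : ℕ)) (by omega)
  have e1 : Fl α ((i + (j : ℕ)) + 1) (cLow w α) - Fl α (i + (j : ℕ)) (cLow w α)
      = Fl α ((j : ℕ) + 1) x - Fl α (j : ℕ) x := by
    rw [show (i + (j : ℕ)) + 1 = i + ((j : ℕ) + 1) from rfl]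
    rw [hshift, hshift, hfl _ (by omega), hfl _ (by omega)]
    rw [Fl, Fl]
    push_cast
    ring
  cases h : u.get j
  · have hd : ¬(Fl α ((j : ℕ) + 1) x - Fl α (j : ℕ) x = 1) := by
      intro hc
      have := (hmech j).2 hc
      rw [h] at this
      exact absurd this (by simp)
    have hwne : w (i + (j : ℕ)) ≠ true := by
      intro hw
      exact hd (by rw [← e1]; exact hst.1 hw)
    exact Bool.eq_false_iff.2 hwne
  · have hw : w (i + (j : ℕ)) = true := hst.2 (by rw [e1]; exact (hmech j).1 h)
    exact hw

lemma nat_ne (hirr : Irrational α) {k : ℕ} (hk : k ≠ 0) (z : ℤ) : (k : ℝ) * α ≠ z := by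
  intro h
  refine int_ne hirr (k := (k : ℤ)) (by exact_mod_cast hk) z ?_
  push_cast
  push_cast at h
  linarith

lemma Flstep (h0 : 0 < α) (h1 : α < 1) (k : ℕ) (x : ℝ) :
    Fl α k x ≤ Fl α (k + 1) x ∧ Fl α (k + 1) x ≤ Fl α k x + 1 := by
  constructor
  · apply Int.floor_mono
    push_cast
    nlinarith
  · rw [Fl, Fl]
    have h : ((k + 1 : ℕ) : ℝ) * α + x ≤ ((k : ℝ) * α + x) + 1 := by push_cast; nlinarith
    calc ⌊((k + 1 : ℕ) : ℝ) * α + x⌋ ≤ ⌊((k : ℝ) * α + x) + 1⌋ := Int.floor_mono h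
      _ = ⌊(k : ℝ) * α + x⌋ + 1 := Int.floor_add_one _

end Main
end SBAux

namespace SBAux
section Main2
variable {α : ℝ} {w : ℕ → Bool}

def RCond (α : ℝ) (s : List Bool) : Prop :=
  ∀ j : ℕ, ∀ hj : j < s.length,
    (s.get ⟨j, hj⟩ = true ↔
      ⌊((s.length + 1 - j : ℕ) : ℝ) * α⌋ - ⌊((s.length - j : ℕ) : ℝ) * α⌋ = 1)

lemma prefix_iff_rcond (α : ℝ) (s : List Bool) :
    IsPrefixOf s.reverse (charWord α) ↔ RCond α s := by
  constructor
  · intro hpre j hj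
    set n := s.length with hn
    have hj' : n - 1 - j < s.reverse.length := by simp; omega
    have h := hpre ⟨n - 1 - j, hj'⟩
    have hrget : s.reverse.get ⟨n - 1 - j, hj'⟩ = s.get ⟨j, hj⟩ := by
      simp only [List.get_eq_getElem]
      rw [List.getElem_reverse]
      congr 1
      omega
    rw [hrget] at h
    rw [← h]
    simp only [charWord, decide_eq_true_eq]
    have e1 : ((n - 1 - j : ℕ) : ℝ) + 2 = ((n + 1 - j : ℕ) : ℝ) := by
      have e : n + 1 - j = (n - 1 - j) + 2 := by omega
      rw [e]; push_cast; ring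
    have e2 : ((n - 1 - j : ℕ) : ℝ) + 1 = ((n - j : ℕ) : ℝ) := by
      have e : n - j = (n - 1 - j) + 1 := by omega
      rw [e]; push_cast; ring
    rw [e1, e2]
  · intro hc j
    have hjlen : (j : ℕ) < s.length := by have := j.isLt; simpa using this
    set n := s.length with hn
    set i := n - 1 - (j : ℕ) with hidef
    have hi : i < n := by omega
    have h := hc i hi
    have hrget : s.reverse.get j = s.get ⟨i, hi⟩ := by
      simp only [List.get_eq_getElem]
      rw [List.getElem_reverse]
    have e1 : ((n + 1 - i : ℕ) : ℝ) = ((j : ℕ) : ℝ) + 2 := by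
      have e : n + 1 - i = (j : ℕ) + 2 := by omega
      rw [e]; push_cast; ring
    have e2 : ((n - i : ℕ) : ℝ) = ((j : ℕ) : ℝ) + 1 := by
      have e : n - i = (j : ℕ) + 1 := by omega
      rw [e]; push_cast; ring
    rw [e1, e2] at h
    rw [hrget]
    cases hg : s.get ⟨i, hi⟩
    · rw [hg] at h
      simp only [Bool.false_eq_true, false_iff] at h
      simp [charWord, h]
    · rw [hg] at h
      simp only [true_iff] at h
      simp [charWord, h]


open Filter in
lemma rcond_of_factors (hirr : Irrational α) (h0 : 0 < α) (h1 : α < 1)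
    (hbal : BalancedWord w)
    (hfreq : Tendsto (fun n : ℕ => ((cnt w n : ℝ)) / n) atTop (nhds α))
    (s : List Bool)
    (hfa : IsFactor w (s ++ [false])) (hfb : IsFactor w (s ++ [true])) :
    RCond α s := by
  set n := s.length with hn
  obtain ⟨x, hx0, hx1, hmx⟩ := mech_of_factor hirr hbal hfreq _ hfa
  obtain ⟨y, hy0, hy1, hmy⟩ := mech_of_factor hirr hbal hfreq _ hfb
  have hmx' : ∀ k : ℕ, (hk : k < n + 1) →
      ((s ++ [false]).get ⟨k, by simpa using hk⟩ = true ↔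
        Fl α (k + 1) x - Fl α k x = 1) := by
    intro k hk
    exact hmx ⟨k, by simpa using hk⟩
  have hmy' : ∀ k : ℕ, (hk : k < n + 1) →
      ((s ++ [true]).get ⟨k, by simpa using hk⟩ = true ↔
        Fl α (k + 1) y - Fl α k y = 1) := by
    intro k hk
    exact hmy ⟨k, by simpa using hk⟩
  have hgx : ∀ k : ℕ, ∀ hk : k < n, ∀ b : Bool,
      (s ++ [b]).get ⟨k, by simp; omega⟩ = s.get ⟨k, hk⟩ := by
    intro k hk b
    simp only [List.get_eq_getElem]
    exact List.getElem_append_left _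
  have hgn : ∀ b : Bool, (s ++ [b]).get ⟨n, by simp [hn]⟩ = b := by
    intro b
    simp only [List.get_eq_getElem]
    simp [hn]
  have step : ∀ k : ℕ, k < n →
      Fl α (k + 1) x - Fl α k x = Fl α (k + 1) y - Fl α k y := by
    intro k hk
    have ha := hmx' k (by omega)
    have hb := hmy' k (by omega)
    rw [hgx k hk false] at ha
    rw [hgx k hk true] at hb
    have hsx := Flstep h0 h1 k x
    have hsy := Flstep h0 h1 k y
    cases hg : s.get ⟨k, hk⟩
    · rw [hg] at ha hb
      simp only [Bool.false_eq_true, false_iff] at ha hb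
      omega
    · rw [hg] at ha hb
      simp only [true_iff] at ha hb
      omega
  have hFG : ∀ k : ℕ, k ≤ n → Fl α k x = Fl α k y := by
    intro k
    induction k with
    | zero =>
      intro _
      have e1 : Fl α 0 x = 0 := by
        rw [Fl]
        norm_num
        exact ⟨hx0, hx1⟩
      have e2 : Fl α 0 y = 0 := by
        rw [Fl]
        norm_num
        exact ⟨hy0, hy1⟩
      rw [e1, e2]
    | succ k ih =>
      intro hk
      have h1' := ih (by omega)
      have h2' := step k (by omega)
      omega
  have hMx : Fl α (n + 1) x = Fl α n x := by
    have ha := hmx' n (by omega)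
    rw [hgn false] at ha
    simp only [Bool.false_eq_true, false_iff] at ha
    have hsx := Flstep h0 h1 n x
    omega
  have hMy : Fl α (n + 1) y = Fl α n y + 1 := by
    have hb := hmy' n (by omega)
    rw [hgn true] at hb
    simp only [true_iff] at hb
    omega
  set M := Fl α (n + 1) y with hM
  have hMx' : Fl α (n + 1) x = M - 1 := by
    have := hFG n le_rfl
    omega
  set θ := (M : ℝ) - ((n : ℝ) + 1) * α with hθ
  have hxθ : x < θ := by
    have hlt := Int.lt_floor_add_one (((n + 1 : ℕ) : ℝ) * α + x)
    have hfl : (⌊((n + 1 : ℕ) : ℝ) * α + x⌋ : ℤ) = M - 1 := hMx'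
    rw [hfl] at hlt
    push_cast at hlt
    rw [hθ]
    linarith
  have hθy : θ ≤ y := by
    have hle := Int.floor_le (((n + 1 : ℕ) : ℝ) * α + y)
    have hfl : (⌊((n + 1 : ℕ) : ℝ) * α + y⌋ : ℤ) = M := rfl
    rw [hfl] at hle
    push_cast at hle
    rw [hθ]
    linarith
  have hFθ : ∀ k : ℕ, k ≤ n → ⌊(k : ℝ) * α + θ⌋ = Fl α k x := by
    intro k hk
    have hle : Fl α k x ≤ ⌊(k : ℝ) * α + θ⌋ := Int.floor_mono (by linarith)
    have hge : ⌊(k : ℝ) * α + θ⌋ ≤ Fl α k y := Int.floor_mono (by linarith)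
    have := hFG k hk
    omega
  have hform : ∀ k : ℕ, k ≤ n → ⌊(k : ℝ) * α + θ⌋ = M - ⌊((n + 1 - k : ℕ) : ℝ) * α⌋ - 1 := by
    intro k hk
    have e : (k : ℝ) * α + θ = (M : ℝ) - ((n + 1 - k : ℕ) : ℝ) * α := by
      rw [Nat.cast_sub (by omega : k ≤ n + 1)]
      push_cast
      rw [hθ]
      ring
    rw [e, floor_M_sub M _ (fun z => nat_ne hirr (k := n + 1 - k) (by omega) z)]
  intro j hj
  have ha := hmx' j (by omega)
  rw [hgx j hj false] at ha
  have d1 := hFθ (j + 1) (by omega)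
  have d2 := hFθ j (by omega)
  have f1 := hform (j + 1) (by omega)
  have f2 := hform j (by omega)
  rw [show n + 1 - (j + 1) = n - j from by omega] at f1
  have key : Fl α (j + 1) x - Fl α j x
      = ⌊((n + 1 - j : ℕ) : ℝ) * α⌋ - ⌊((n - j : ℕ) : ℝ) * α⌋ := by omega
  rw [key] at ha
  exact ha

open Filter in
lemma factors_of_rcond (hirr : Irrational α) (h0 : 0 < α) (h1 : α < 1)
    (hbal : BalancedWord w)
    (hfreq : Tendsto (fun n : ℕ => ((cnt w n : ℝ)) / n) atTop (nhds α))
    (s : List Bool) (hc : RCond α s) :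
    IsFactor w (s ++ [false]) ∧ IsFactor w (s ++ [true]) := by
  obtain ⟨N₀, hN₀⟩ := exc (w := w) hirr
  set n := s.length with hn
  set M := ⌈((n : ℝ) + 1) * α⌉ with hM
  set y := (M : ℝ) - ((n : ℝ) + 1) * α with hy
  have hy0 : 0 < y := by
    have ha := Int.le_ceil (((n : ℝ) + 1) * α)
    have hb : ((n : ℝ) + 1) * α ≠ (M : ℝ) := by
      have hne := nat_ne hirr (k := n + 1) (by omega) M
      push_cast at hne
      exact hne
    rw [hy]
    have := lt_of_le_of_ne ha hb
    linarith
  have hy1 : y < 1 := by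
    have := Int.ceil_lt_add_one (((n : ℝ) + 1) * α)
    rw [hy]
    linarith
  have hFl_y : ∀ k : ℕ, k ≤ n → Fl α k y = M - ⌊((n + 1 - k : ℕ) : ℝ) * α⌋ - 1 := by
    intro k hk
    have e : (k : ℝ) * α + y = (M : ℝ) - ((n + 1 - k : ℕ) : ℝ) * α := by
      rw [Nat.cast_sub (by omega : k ≤ n + 1)]
      push_cast
      rw [hy]
      ring
    rw [Fl, e, floor_M_sub M _ (fun z => nat_ne hirr (k := n + 1 - k) (by omega) z)]
  have hFl_y_top : Fl α (n + 1) y = M := by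
    rw [Fl, show ((n + 1 : ℕ) : ℝ) * α + y = (M : ℝ) by push_cast; rw [hy]; ring]
    exact Int.floor_intCast M
  have hα0 : ⌊((1 : ℕ) : ℝ) * α⌋ = 0 := by
    norm_num
    exact ⟨h0.le, h1⟩
  have hgs : ∀ k : ℕ, ∀ hk : k < n, ∀ b : Bool,
      (s ++ [b]).get ⟨k, by simp; omega⟩ = s.get ⟨k, hk⟩ := by
    intro k hk b
    simp only [List.get_eq_getElem]
    exact List.getElem_append_left _
  have hgn : ∀ b : Bool, (s ++ [b]).get ⟨n, by simp [hn]⟩ = b := by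
    intro b
    simp only [List.get_eq_getElem]
    simp [hn]
  -- the intercept for s ++ [true] is y itself
  have hmy : ∀ j : Fin (s ++ [true]).length,
      ((s ++ [true]).get j = true ↔ Fl α ((j : ℕ) + 1) y - Fl α (j : ℕ) y = 1) := by
    intro j
    have hjl : (j : ℕ) < n + 1 := by simpa using j.isLt
    have hj' : j = ⟨(j : ℕ), by simpa using hjl⟩ := by
      apply Fin.ext
      rfl
    rcases Nat.lt_succ_iff_lt_or_eq.1 hjl with hlt | heq
    · rw [hj', hgs (j : ℕ) hlt true]
      have hcj := hc (j : ℕ) hlt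
      have f1 := hFl_y ((j : ℕ) + 1) (by omega)
      have f2 := hFl_y (j : ℕ) (by omega)
      rw [show n + 1 - ((j : ℕ) + 1) = n - (j : ℕ) from by omega] at f1
      have key : Fl α ((j : ℕ) + 1) y - Fl α (j : ℕ) y
          = ⌊((n + 1 - (j : ℕ) : ℕ) : ℝ) * α⌋ - ⌊((n - (j : ℕ) : ℕ) : ℝ) * α⌋ := by omega
      rw [key]
      exact hcj
    · rw [hj']
      have hjn : (⟨(j : ℕ), by simpa using hjl⟩ : Fin (s ++ [true]).length)
          = ⟨n, by simp [hn]⟩ := by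
        apply Fin.ext
        exact heq
      rw [hjn, hgn true]
      simp only [true_iff]
      show Fl α (n + 1) y - Fl α n y = 1
      have f2 := hFl_y n le_rfl
      rw [show n + 1 - n = 1 from by omega] at f2
      omega
  -- the intercept for s ++ [false]
  have hfpos : ∀ k : ℕ, k ≤ n → 0 < Int.fract ((k : ℝ) * α + y) := by
    intro k hk
    refine Int.fract_pos.2 ?_
    intro hq
    apply nat_ne hirr (k := n + 1 - k) (by omega) (M - ⌊(k : ℝ) * α + y⌋)
    rw [Nat.cast_sub (by omega : k ≤ n + 1)]
    rw [hy] at hq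
    push_cast
    push_cast at hq
    linarith
  have hEne : (Finset.range (n + 1)).Nonempty := ⟨0, by simp⟩
  set E := (Finset.range (n + 1)).inf' hEne (fun k : ℕ => Int.fract ((k : ℝ) * α + y)) with hE
  have hE0 : 0 < E := by
    rw [hE, Finset.lt_inf'_iff]
    intro k hkmem
    simp only [Finset.mem_range] at hkmem
    exact hfpos k (by omega)
  have hEle : ∀ k : ℕ, k ≤ n → E ≤ Int.fract ((k : ℝ) * α + y) := by
    intro k hk
    rw [hE]
    exact Finset.inf'_le _ (by simp; omega)
  set ε := E / 2 with hεdef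
  have hε0 : 0 < ε := by rw [hεdef]; linarith
  have hεE : ε < E := by rw [hεdef]; linarith
  have hfy : Int.fract (((0 : ℕ) : ℝ) * α + y) = y := by
    norm_num
    exact ⟨hy0.le, hy1⟩
  have hεy : ε < y := by
    have := hEle 0 (by omega)
    rw [hfy] at this
    linarith
  set x := y - ε with hx
  have hx0 : 0 < x := by rw [hx]; linarith
  have hx1 : x < 1 := by rw [hx]; linarith
  have hFl_x : ∀ k : ℕ, k ≤ n → Fl α k x = Fl α k y := by
    intro k hk
    have hfr := Int.floor_add_fract ((k : ℝ) * α + y)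
    have hEk := hEle k hk
    have h1' : (⌊(k : ℝ) * α + y⌋ : ℝ) ≤ (k : ℝ) * α + x := by rw [hx]; linarith
    have h2' : (k : ℝ) * α + x < (k : ℝ) * α + y := by rw [hx]; linarith
    rw [Fl, Fl]
    have hle : ⌊(k : ℝ) * α + y⌋ ≤ ⌊(k : ℝ) * α + x⌋ := Int.le_floor.2 h1'
    have hge : ⌊(k : ℝ) * α + x⌋ ≤ ⌊(k : ℝ) * α + y⌋ := Int.floor_mono h2'.le
    omega
  have hε1 : ε < 1 := by linarith
  have hFl_x_top : Fl α (n + 1) x = M - 1 := by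
    rw [Fl, show ((n + 1 : ℕ) : ℝ) * α + x = (M : ℝ) - ε by push_cast; rw [hx, hy]; ring]
    rw [Int.floor_eq_iff]
    constructor
    · push_cast
      linarith
    · push_cast
      linarith
  have hmx : ∀ j : Fin (s ++ [false]).length,
      ((s ++ [false]).get j = true ↔ Fl α ((j : ℕ) + 1) x - Fl α (j : ℕ) x = 1) := by
    intro j
    have hjl : (j : ℕ) < n + 1 := by simpa using j.isLt
    have hj' : j = ⟨(j : ℕ), by simpa using hjl⟩ := by
      apply Fin.ext
      rfl
    rcases Nat.lt_succ_iff_lt_or_eq.1 hjl with hlt | heq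
    · rw [hj', hgs (j : ℕ) hlt false]
      have hcj := hc (j : ℕ) hlt
      have f1 := hFl_y ((j : ℕ) + 1) (by omega)
      have f2 := hFl_y (j : ℕ) (by omega)
      have g1 := hFl_x ((j : ℕ) + 1) (by omega)
      have g2 := hFl_x (j : ℕ) (by omega)
      rw [show n + 1 - ((j : ℕ) + 1) = n - (j : ℕ) from by omega] at f1
      have key : Fl α ((j : ℕ) + 1) x - Fl α (j : ℕ) x
          = ⌊((n + 1 - (j : ℕ) : ℕ) : ℝ) * α⌋ - ⌊((n - (j : ℕ) : ℕ) : ℝ) * α⌋ := by omega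
      rw [key]
      exact hcj
    · rw [hj']
      have hjn : (⟨(j : ℕ), by simpa using hjl⟩ : Fin (s ++ [false]).length)
          = ⟨n, by simp [hn]⟩ := by
        apply Fin.ext
        exact heq
      rw [hjn, hgn false]
      simp only [Bool.false_eq_true, false_iff]
      show ¬(Fl α (n + 1) x - Fl α n x = 1)
      have f2 := hFl_y n le_rfl
      have g2 := hFl_x n le_rfl
      rw [show n + 1 - n = 1 from by omega] at f2
      omega
  constructor
  · exact factor_of_mech hirr hbal hfreq N₀ hN₀ (s ++ [false]) x hx0.le hx1 hmx
  · exact factor_of_mech hirr hbal hfreq N₀ hN₀ (s ++ [true]) y hy0.le hy1 hmy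

end Main2

end SBAux

theorem factor_extend_iff_reverse_prefix_char (α : ℝ) (hirr : Irrational α)
    (h0 : 0 < α) (h1 : α < 1) (w : ℕ → Bool) (hw : SturmianWord w)
    (hfreq : Filter.Tendsto
      (fun n : ℕ => (((Finset.range n).filter fun i => w i = true).card : ℝ) / n)
      Filter.atTop (nhds α)) :
    ∀ s : List Bool,
      (IsFactor w (s ++ [false]) ∧ IsFactor w (s ++ [true])) ↔
        IsPrefixOf s.reverse (charWord α) := by
  intro s
  have hfreq' : Filter.Tendsto (fun n : ℕ => ((SBAux.cnt w n : ℝ)) / n)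
      Filter.atTop (nhds α) := hfreq
  constructor
  · rintro ⟨hfa, hfb⟩
    exact (SBAux.prefix_iff_rcond α s).2
      (SBAux.rcond_of_factors hirr h0 h1 hw.1 hfreq' s hfa hfb)
  · intro hpre
    exact SBAux.factors_of_rcond hirr h0 h1 hw.1 hfreq' s
      ((SBAux.prefix_iff_rcond α s).1 hpre)

end StringBricks
end
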